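/- arXiv:2107.14294 — 8 statements merged into one kernel-verified Lean document; each statement's English description precedes it below -/
import Mathlib

section
/- Let $H > 1/3$. Then the double integral $\int_0^\infty \int_0^\infty (s_1 s_2)^{H-1/2} (s_1^{2H} + |s_2-s_1|^{2H})^{-3/2} (1 \vee \sqrt{s_1^{2H} + |s_2-s_1|^{2H}})^{-2} \, ds_1 \, ds_2$ is finite. -/
open MeasureTheory Set
open scoped ENNReal

lemma min_one_mul_self {s : ℝ} (hs : 0 ≤ s) : min 1 s * min 1 s = min 1 (s * s) := by
  rcases le_total s 1 with h | h
  · rw [min_eq_right h, min_eq_right (by nlinarith)]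
  · rw [min_eq_left h, min_eq_left (by nlinarith), one_mul]

lemma min_one_two_mul {t : ℝ} : min 1 (2 * t) ≤ 2 * min 1 t := by
  rcases le_total t 1 with h | h
  · rw [min_eq_right h]; exact min_le_right _ _
  · rw [min_eq_left h]
    calc min 1 (2*t) ≤ 1 := min_le_left _ _
      _ ≤ 2 * 1 := by norm_num

lemma max_sqrt_rpow_neg_two {Q : ℝ} (hQ : 0 < Q) :
    (max 1 (Real.sqrt Q)) ^ (-(2:ℝ)) = min 1 Q⁻¹ := by
  rcases le_total Q 1 with h | h
  · rw [max_eq_left (Real.sqrt_le_one.2 h), Real.one_rpow,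
      min_eq_left (one_le_inv_iff₀.2 ⟨hQ, h⟩)]
  · rw [max_eq_right (Real.one_le_sqrt.2 h), min_eq_right (inv_le_one_of_one_le₀ h),
      Real.sqrt_eq_rpow, ← Real.rpow_mul hQ.le]
    norm_num
    exact (Real.rpow_neg_one Q)

noncomputable def gr (H t : ℝ) : ℝ := t ^ (-((1+H)/2)) * min 1 (t ^ (-H))

lemma two_rpow_le_two {c : ℝ} (hc : c ≤ 1) : (2:ℝ) ^ c ≤ 2 := by
  have := Real.rpow_le_rpow_of_exponent_le one_le_two hc
  rwa [Real.rpow_one] at this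

lemma keyAB (H x y : ℝ) (hH0 : 0 < H) (hH1 : H < 1) (hx : 0 < x) (hy : 0 < y)
    (hcase : y ≤ x/2 ∨ 2*x ≤ y ∨ y = x) :
    (x*y) ^ (H - 1/2) * (x ^ (2*H) + |y - x| ^ (2*H)) ^ (-(3:ℝ)/2)
      * (max 1 (Real.sqrt (x ^ (2*H) + |y - x| ^ (2*H)))) ^ (-(2:ℝ))
    ≤ 16 * gr H x * gr H y := by
  set u := |y - x| with hu
  set Q := x ^ (2*H) + u ^ (2*H) with hQ
  have hu0 : 0 ≤ u := abs_nonneg _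
  have hQx : x ^ (2*H) ≤ Q := le_add_of_nonneg_right (Real.rpow_nonneg hu0 _)
  have hQu : u ^ (2*H) ≤ Q := le_add_of_nonneg_left (Real.rpow_nonneg hx.le _)
  have hQ0 : 0 < Q := lt_of_lt_of_le (Real.rpow_pos_of_pos hx _) hQx
  have hm : (max 1 (Real.sqrt Q)) ^ (-(2:ℝ)) = min 1 Q⁻¹ := max_sqrt_rpow_neg_two hQ0
  have hsplit : min 1 Q⁻¹ = min 1 (Q ^ (-(1:ℝ)/2)) * min 1 (Q ^ (-(1:ℝ)/2)) := by
    rw [min_one_mul_self (Real.rpow_nonneg hQ0.le _), ← Real.rpow_add hQ0]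
    norm_num
    rw [Real.rpow_neg_one]
  have hminx : min 1 (Q ^ (-(1:ℝ)/2)) ≤ min 1 (x ^ (-H)) := by
    refine min_le_min le_rfl ?_
    have hQhalfx : x ^ H ≤ Q ^ ((1:ℝ)/2) := by
      calc x ^ H = (x ^ (2*H)) ^ ((1:ℝ)/2) := by
            rw [← Real.rpow_mul hx.le]; congr 1; ring
        _ ≤ Q ^ ((1:ℝ)/2) := Real.rpow_le_rpow (Real.rpow_nonneg hx.le _) hQx (by norm_num)
    rw [Real.rpow_neg hx.le, neg_div, Real.rpow_neg hQ0.le]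
    exact inv_anti₀ (Real.rpow_pos_of_pos hx _) hQhalfx
  -- diagonal case
  have hdiag : y = x → (x*y) ^ (H - 1/2) * Q ^ (-(3:ℝ)/2)
      * (max 1 (Real.sqrt Q)) ^ (-(2:ℝ)) ≤ 16 * gr H x * gr H y := by
    intro hc; subst hc
    have hu0' : u = 0 := by rw [hu, sub_self, abs_zero]
    have hQ' : Q = y ^ (2*H) := by rw [hQ, hu0', Real.zero_rpow (by positivity), add_zero]
    have hL1 : (y*y) ^ (H - 1/2) * Q ^ (-(3:ℝ)/2) = y ^ (-(1+H)) := by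
      rw [hQ', Real.mul_rpow hy.le hy.le, ← Real.rpow_mul hy.le,
        ← Real.rpow_add hy, ← Real.rpow_add hy]
      congr 1; ring
    have hL2 : min 1 Q⁻¹ = min 1 (y ^ (-(2*H))) := by
      rw [hQ', ← Real.rpow_neg hy.le]
    have hR : 16 * gr H y * gr H y = 16 * (y ^ (-(1+H)) * min 1 (y ^ (-(2*H)))) := by
      unfold gr
      rw [show (16:ℝ) * (y ^ (-((1+H)/2)) * min 1 (y ^ (-H)))
            * (y ^ (-((1+H)/2)) * min 1 (y ^ (-H)))
          = 16 * ((y ^ (-((1+H)/2)) * y ^ (-((1+H)/2)))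
            * (min 1 (y ^ (-H)) * min 1 (y ^ (-H)))) by ring,
        min_one_mul_self (Real.rpow_nonneg hy.le _), ← Real.rpow_add hy, ← Real.rpow_add hy,
        show -((1+H)/2) + -((1+H)/2) = -(1+H) by ring, show -H + -H = -(2*H) by ring]
    rw [hm, hL2, hR]
    have h16 : (y*y) ^ (H - 1/2) * Q ^ (-(3:ℝ)/2) * min 1 (y ^ (-(2*H)))
        = y ^ (-(1+H)) * min 1 (y ^ (-(2*H))) := by rw [hL1]
    rw [h16]
    have hnn : 0 ≤ y ^ (-(1+H)) * min 1 (y ^ (-(2*H))) := by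
      have := Real.rpow_nonneg hy.le (-(1+H))
      have h2 : (0:ℝ) ≤ min 1 (y ^ (-(2*H))) := le_min zero_le_one (Real.rpow_nonneg hy.le _)
      positivity
    linarith
  -- core off-diagonal case
  have hcore : x/2 ≤ u → y/2 ≤ u →
      (x*y) ^ (H - 1/2) * Q ^ (-(3:ℝ)/2)
        * (max 1 (Real.sqrt Q)) ^ (-(2:ℝ)) ≤ 16 * gr H x * gr H y := by
    intro hux huy
    have hu0' : 0 < u := lt_of_lt_of_le (by positivity) hux
    have hP : 0 < x * y := mul_pos hx hy
    set A := x*y/4 with hA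
    have hA0 : 0 < A := by positivity
    have hAu : A ^ H ≤ Q := by
      have h1 : A ≤ u * u := by nlinarith
      calc A ^ H ≤ (u*u) ^ H := Real.rpow_le_rpow hA0.le h1 hH0.le
        _ = u ^ (2*H) := by
            rw [Real.mul_rpow hu0'.le hu0'.le, ← Real.rpow_add hu0']; congr 1; ring
        _ ≤ Q := hQu
    have h24 : (2:ℝ) ^ (2:ℝ) = 4 := by norm_num
    have h23 : (2:ℝ) ^ (3:ℝ) = 8 := by norm_num
    have h432 : (4:ℝ) ^ ((3:ℝ)/2) = 8 := by
      rw [← h24, ← Real.rpow_mul (by norm_num : (0:ℝ) ≤ 2)]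
      rw [show (2:ℝ) * ((3:ℝ)/2) = 3 by ring, h23]
    have h8 : Q ^ (-(3:ℝ)/2) ≤ 8 * (x*y) ^ (-(3*H)/2) := by
      calc Q ^ (-(3:ℝ)/2) ≤ (A ^ H) ^ (-(3:ℝ)/2) :=
            Real.rpow_le_rpow_of_nonpos (Real.rpow_pos_of_pos hA0 _) hAu (by norm_num)
        _ = A ^ (-(3*H)/2) := by rw [← Real.rpow_mul hA0.le]; congr 1; ring
        _ = (x*y) ^ (-(3*H)/2) * 4 ^ ((3*H)/2) := by
            rw [hA, div_eq_mul_inv, Real.mul_rpow hP.le (by norm_num),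
              Real.inv_rpow (by norm_num), ← Real.rpow_neg (by norm_num)]
            congr 1; ring
        _ ≤ (x*y) ^ (-(3*H)/2) * 8 := by
            refine mul_le_mul_of_nonneg_left ?_ (Real.rpow_nonneg hP.le _)
            calc (4:ℝ) ^ ((3*H)/2) ≤ (4:ℝ) ^ ((3:ℝ)/2) :=
                  Real.rpow_le_rpow_of_exponent_le (by norm_num) (by linarith)
              _ = 8 := h432
        _ = 8 * (x*y) ^ (-(3*H)/2) := mul_comm _ _
    have hminy : min 1 (Q ^ (-(1:ℝ)/2)) ≤ 2 * min 1 (y ^ (-H)) := by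
      have hyu : (y/2) ^ H ≤ Q ^ ((1:ℝ)/2) := by
        calc (y/2) ^ H ≤ u ^ H := Real.rpow_le_rpow (by positivity) (by linarith) hH0.le
          _ = (u ^ (2*H)) ^ ((1:ℝ)/2) := by rw [← Real.rpow_mul hu0'.le]; congr 1; ring
          _ ≤ Q ^ ((1:ℝ)/2) := Real.rpow_le_rpow (Real.rpow_nonneg hu0'.le _) hQu (by norm_num)
      have h5 : Q ^ (-(1:ℝ)/2) ≤ (y/2) ^ (-H) := by
        rw [neg_div, Real.rpow_neg hQ0.le, Real.rpow_neg (by positivity)]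
        exact inv_anti₀ (Real.rpow_pos_of_pos (by positivity) _) hyu
      have h6 : (y/2:ℝ) ^ (-H) = 2 ^ H * y ^ (-H) := by
        rw [div_eq_mul_inv, Real.mul_rpow hy.le (by norm_num),
          Real.inv_rpow (by norm_num), ← Real.rpow_neg (by norm_num), neg_neg, mul_comm]
      calc min 1 (Q ^ (-(1:ℝ)/2)) ≤ min 1 (2 ^ H * y ^ (-H)) :=
            min_le_min le_rfl (h5.trans (le_of_eq h6))
        _ ≤ min 1 (2 * y ^ (-H)) := min_le_min le_rfl
            (mul_le_mul_of_nonneg_right (two_rpow_le_two hH1.le) (Real.rpow_nonneg hy.le _))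
        _ ≤ 2 * min 1 (y ^ (-H)) := min_one_two_mul
    have hPsplit : (x*y) ^ (H - 1/2) * (x*y) ^ (-(3*H)/2)
        = x ^ (-((1+H)/2)) * y ^ (-((1+H)/2)) := by
      rw [← Real.rpow_add hP, show (H - 1/2) + (-(3*H)/2) = -((1+H)/2) by ring,
        Real.mul_rpow hx.le hy.le]
    calc (x*y) ^ (H - 1/2) * Q ^ (-(3:ℝ)/2) * (max 1 (Real.sqrt Q)) ^ (-(2:ℝ))
        = (x*y) ^ (H - 1/2) * Q ^ (-(3:ℝ)/2)
            * (min 1 (Q ^ (-(1:ℝ)/2)) * min 1 (Q ^ (-(1:ℝ)/2))) := by rw [hm, hsplit]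
      _ ≤ (x*y) ^ (H - 1/2) * (8 * (x*y) ^ (-(3*H)/2))
            * (min 1 (x ^ (-H)) * (2 * min 1 (y ^ (-H)))) := by
          have n1 : (0:ℝ) ≤ (x*y) ^ (H - 1/2) := Real.rpow_nonneg hP.le _
          have n2 : (0:ℝ) ≤ min 1 (Q ^ (-(1:ℝ)/2)) := le_min zero_le_one (Real.rpow_nonneg hQ0.le _)
          have n3 : (0:ℝ) ≤ Q ^ (-(3:ℝ)/2) := Real.rpow_nonneg hQ0.le _
          apply mul_le_mul
          · exact mul_le_mul_of_nonneg_left h8 n1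
          · exact mul_le_mul hminx hminy n2 (le_min zero_le_one (Real.rpow_nonneg hx.le _))
          · exact mul_nonneg n2 n2
          · positivity
      _ = 16 * gr H x * gr H y := by
          unfold gr
          linear_combination (16 * min 1 (x ^ (-H)) * min 1 (y ^ (-H))) * hPsplit
  rcases hcase with hc | hc | hc
  · refine hcore ?_ ?_
    · rw [hu, abs_sub_comm, abs_of_nonneg (by linarith)]; linarith
    · rw [hu, abs_sub_comm, abs_of_nonneg (by linarith)]; linarith
  · refine hcore ?_ ?_
    · rw [hu, abs_of_nonneg (by linarith)]; linarith
    · rw [hu, abs_of_nonneg (by linarith)]; linarith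
  · exact hdiag hc

lemma keyC (H x y : ℝ) (hH0 : 0 < H) (hH1 : H < 1) (hx : 0 < x) (hy : 0 < y)
    (h1 : x/2 < y) (h2 : y < 2*x) (h3 : y ≠ x) :
    (x*y) ^ (H - 1/2) * (x ^ (2*H) + |y - x| ^ (2*H)) ^ (-(3:ℝ)/2)
      * (max 1 (Real.sqrt (x ^ (2*H) + |y - x| ^ (2*H)))) ^ (-(2:ℝ))
    ≤ 2 * (x ^ (-(1:ℝ)) * min 1 (x ^ (-(2*H)))) * |y - x| ^ (-H) := by
  set u := |y - x| with hu
  have hu0 : 0 < u := abs_pos.2 (sub_ne_zero.2 h3)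
  set Q := x ^ (2*H) + u ^ (2*H) with hQ
  have hQx : x ^ (2*H) ≤ Q := le_add_of_nonneg_right (Real.rpow_nonneg hu0.le _)
  have hQu : u ^ (2*H) ≤ Q := le_add_of_nonneg_left (Real.rpow_nonneg hx.le _)
  have hQ0 : 0 < Q := lt_of_lt_of_le (Real.rpow_pos_of_pos hx _) hQx
  have hm : (max 1 (Real.sqrt Q)) ^ (-(2:ℝ)) = min 1 Q⁻¹ := max_sqrt_rpow_neg_two hQ0
  -- y^{H-1/2} ≤ 2 x^{H-1/2}
  have hyx : y ^ (H - 1/2) ≤ 2 * x ^ (H - 1/2) := by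
    rcases le_total (1/2 : ℝ) H with h | h
    · calc y ^ (H - 1/2) ≤ (2*x) ^ (H - 1/2) :=
            Real.rpow_le_rpow hy.le h2.le (by linarith)
        _ = 2 ^ (H - 1/2) * x ^ (H - 1/2) := Real.mul_rpow (by norm_num) hx.le
        _ ≤ 2 * x ^ (H - 1/2) := by
            have h21 : (2:ℝ) ^ (H - 1/2) ≤ 2 ^ (1:ℝ) :=
              Real.rpow_le_rpow_of_exponent_le one_le_two (by linarith)
            rw [Real.rpow_one] at h21
            exact mul_le_mul_of_nonneg_right h21 (Real.rpow_nonneg hx.le _)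
    · calc y ^ (H - 1/2) ≤ (x/2) ^ (H - 1/2) :=
            Real.rpow_le_rpow_of_nonpos (by linarith) h1.le (by linarith)
        _ = x ^ (H - 1/2) * (2:ℝ) ^ (-(H - 1/2)) := by
            rw [div_eq_mul_inv, Real.mul_rpow hx.le (by norm_num),
              Real.inv_rpow (by norm_num), ← Real.rpow_neg (by norm_num)]
        _ ≤ x ^ (H - 1/2) * 2 := by
            have h21 : (2:ℝ) ^ (-(H - 1/2)) ≤ 2 ^ (1:ℝ) :=
              Real.rpow_le_rpow_of_exponent_le one_le_two (by linarith)
            rw [Real.rpow_one] at h21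
            exact mul_le_mul_of_nonneg_left h21 (Real.rpow_nonneg hx.le _)
        _ = 2 * x ^ (H - 1/2) := mul_comm _ _
  -- Q^{-3/2} ≤ x^{-2H} u^{-H}
  have hQ32 : Q ^ (-(3:ℝ)/2) ≤ x ^ (-(2*H)) * u ^ (-H) := by
    have hhalf : u ^ H ≤ Q ^ ((1:ℝ)/2) := by
      calc u ^ H = (u ^ (2*H)) ^ ((1:ℝ)/2) := by
            rw [← Real.rpow_mul hu0.le]; congr 1; ring
        _ ≤ Q ^ ((1:ℝ)/2) :=
            Real.rpow_le_rpow (Real.rpow_nonneg hu0.le _) hQu (by norm_num)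
    have h32 : Q ^ ((3:ℝ)/2) = Q * Q ^ ((1:ℝ)/2) := by
      rw [← Real.rpow_one_add' hQ0.le (by norm_num)]; norm_num
    have hprod : x ^ (2*H) * u ^ H ≤ Q ^ ((3:ℝ)/2) := by
      rw [h32]
      exact mul_le_mul hQx hhalf (Real.rpow_nonneg hu0.le _) hQ0.le
    have hppos : 0 < x ^ (2*H) * u ^ H :=
      mul_pos (Real.rpow_pos_of_pos hx _) (Real.rpow_pos_of_pos hu0 _)
    calc Q ^ (-(3:ℝ)/2) = (Q ^ ((3:ℝ)/2))⁻¹ := by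
          rw [neg_div, Real.rpow_neg hQ0.le]
      _ ≤ (x ^ (2*H) * u ^ H)⁻¹ := by
          exact inv_anti₀ hppos hprod
      _ = x ^ (-(2*H)) * u ^ (-H) := by
          rw [mul_inv, Real.rpow_neg hx.le, Real.rpow_neg hu0.le]
  have hmin : min 1 Q⁻¹ ≤ min 1 (x ^ (-(2*H))) := by
    refine min_le_min le_rfl ?_
    rw [Real.rpow_neg hx.le]
    exact inv_anti₀ (Real.rpow_pos_of_pos hx _) hQx
  have hxx : x ^ (H - 1/2) * x ^ (H - 1/2) * x ^ (-(2*H)) = x ^ (-(1:ℝ)) := by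
    rw [← Real.rpow_add hx, ← Real.rpow_add hx]
    congr 1; ring
  calc (x*y) ^ (H - 1/2) * Q ^ (-(3:ℝ)/2) * (max 1 (Real.sqrt Q)) ^ (-(2:ℝ))
      = (x ^ (H - 1/2) * y ^ (H - 1/2)) * Q ^ (-(3:ℝ)/2) * min 1 Q⁻¹ := by
        rw [Real.mul_rpow hx.le hy.le, hm]
    _ ≤ (x ^ (H - 1/2) * (2 * x ^ (H - 1/2))) * (x ^ (-(2*H)) * u ^ (-H))
          * min 1 (x ^ (-(2*H))) := by
        have n1 : (0:ℝ) ≤ x ^ (H - 1/2) := Real.rpow_nonneg hx.le _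
        have n2 : (0:ℝ) ≤ y ^ (H - 1/2) := Real.rpow_nonneg hy.le _
        have n3 : (0:ℝ) ≤ min 1 Q⁻¹ := le_min zero_le_one (inv_nonneg.2 hQ0.le)
        have n4 : (0:ℝ) ≤ Q ^ (-(3:ℝ)/2) := Real.rpow_nonneg hQ0.le _
        apply mul_le_mul
        · exact mul_le_mul (mul_le_mul_of_nonneg_left hyx n1) hQ32 n4 (by positivity)
        · exact hmin
        · exact n3
        · positivity
    _ = 2 * (x ^ (-(1:ℝ)) * min 1 (x ^ (-(2*H)))) * u ^ (-H) := by
        rw [← hxx]; ring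

lemma aux_int_fin {a b : ℝ} (ha : -1 < a) (hab : a - b < -1) :
    ∫⁻ t in Set.Ioi (0:ℝ), ENNReal.ofReal (t ^ a * min 1 (t ^ (-b))) < ⊤ := by
  rw [← Set.Ioc_union_Ioi_eq_Ioi (zero_le_one (α := ℝ)),
    lintegral_union measurableSet_Ioi (Set.Ioc_disjoint_Ioi le_rfl)]
  have h1 : ∫⁻ t in Set.Ioc (0:ℝ) 1, ENNReal.ofReal (t ^ a * min 1 (t ^ (-b))) < ⊤ := by
    have hint : IntegrableOn (fun t : ℝ => t ^ a) (Set.Ioc 0 1) := by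
      have h := intervalIntegral.intervalIntegrable_rpow' (r := a) (a := 0) (b := 1) ha
      rwa [intervalIntegrable_iff_integrableOn_Ioc_of_le zero_le_one] at h
    have hfin : ∫⁻ t in Set.Ioc (0:ℝ) 1, ENNReal.ofReal (t ^ a) < ⊤ := by
      rw [← hasFiniteIntegral_iff_ofReal]
      · exact hint.2
      · filter_upwards [ae_restrict_mem measurableSet_Ioc] with t ht
        exact Real.rpow_nonneg ht.1.le a
    refine lt_of_le_of_lt ?_ hfin
    refine setLIntegral_mono' measurableSet_Ioc fun t ht => ?_
    apply ENNReal.ofReal_le_ofReal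
    exact mul_le_of_le_one_right (Real.rpow_nonneg ht.1.le a) (min_le_left _ _)
  have h2 : ∫⁻ t in Set.Ioi (1:ℝ), ENNReal.ofReal (t ^ a * min 1 (t ^ (-b))) < ⊤ := by
    have hint : IntegrableOn (fun t : ℝ => t ^ (a - b)) (Set.Ioi 1) :=
      integrableOn_Ioi_rpow_of_lt hab zero_lt_one
    have hfin : ∫⁻ t in Set.Ioi (1:ℝ), ENNReal.ofReal (t ^ (a - b)) < ⊤ := by
      rw [← hasFiniteIntegral_iff_ofReal]
      · exact hint.2
      · filter_upwards [ae_restrict_mem measurableSet_Ioi] with t ht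
        exact Real.rpow_nonneg (by linarith [ht.out] : (0:ℝ) ≤ t) _
    refine lt_of_le_of_lt ?_ hfin
    refine setLIntegral_mono' measurableSet_Ioi fun t ht => ?_
    apply ENNReal.ofReal_le_ofReal
    have ht0 : (0:ℝ) < t := lt_trans zero_lt_one ht
    calc t ^ a * min 1 (t ^ (-b)) ≤ t ^ a * t ^ (-b) :=
          mul_le_mul_of_nonneg_left (min_le_right _ _) (Real.rpow_nonneg ht0.le _)
      _ = t ^ (a - b) := by rw [← Real.rpow_add ht0, sub_eq_add_neg]
  exact ENNReal.add_lt_top.2 ⟨h1, h2⟩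

lemma abs_meas {H : ℝ} : Measurable fun u : ℝ => ENNReal.ofReal (|u| ^ (-H)) := by
  fun_prop

lemma int_Ioo_rpow {H x : ℝ} (hH0 : 0 < H) (hH1 : H < 1) (hx : 0 < x) :
    ∫⁻ u in Set.Ioo (0:ℝ) x, ENNReal.ofReal (|u| ^ (-H))
      = ENNReal.ofReal (x ^ (1-H) / (1-H)) := by
  have hcong : ∫⁻ u in Set.Ioo (0:ℝ) x, ENNReal.ofReal (|u| ^ (-H))
      = ∫⁻ u in Set.Ioo (0:ℝ) x, ENNReal.ofReal (u ^ (-H)) := by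
    refine setLIntegral_congr_fun measurableSet_Ioo (fun u hu => ?_)
    rw [abs_of_pos hu.1]
  rw [hcong]
  have hint : IntegrableOn (fun u : ℝ => u ^ (-H)) (Set.Ioo 0 x) := by
    have h := intervalIntegral.intervalIntegrable_rpow' (r := -H) (a := 0) (b := x)
      (by linarith)
    rw [intervalIntegrable_iff_integrableOn_Ioc_of_le hx.le] at h
    exact h.mono_set Set.Ioo_subset_Ioc_self
  rw [← ofReal_integral_eq_lintegral_ofReal hint
    (ae_restrict_of_forall_mem measurableSet_Ioo fun u hu => Real.rpow_nonneg hu.1.le _)]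
  congr 1
  rw [← integral_Ioc_eq_integral_Ioo, ← intervalIntegral.integral_of_le hx.le,
    integral_rpow (Or.inl (by linarith : (-1:ℝ) < -H)),
    Real.zero_rpow (by linarith : -H + 1 ≠ 0)]
  rw [show -H + 1 = 1 - H by ring]
  ring

lemma innerC {H x : ℝ} (hH0 : 0 < H) (hH1 : H < 1) (hx : 0 < x) :
    ∫⁻ y, (Set.Ioo (x/2) (2*x)).indicator
        (fun y => ENNReal.ofReal (|y - x| ^ (-H))) y
      ≤ ENNReal.ofReal (2/(1-H) * x ^ (1-H)) := by
  set f : ℝ → ℝ≥0∞ := fun y =>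
    (Set.Ioo (x/2) (2*x)).indicator (fun y => ENNReal.ofReal (|y - x| ^ (-H))) y with hf
  have htrans : ∫⁻ u, f (u + x) = ∫⁻ y, f y := lintegral_add_right_eq_self f x
  rw [← htrans]
  have hstep : ∫⁻ u, f (u + x)
      ≤ ∫⁻ u, (Set.Ioo (-x) x).indicator (fun u => ENNReal.ofReal (|u| ^ (-H))) u := by
    refine lintegral_mono fun u => ?_
    rw [hf]
    simp only [Set.indicator_apply, Set.mem_Ioo]
    split_ifs with h1 h2
    · rw [add_sub_cancel_right]
    · exfalso; exact h2 ⟨by linarith [h1.1], by linarith [h1.2]⟩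
    · exact zero_le
    · exact le_rfl
  refine hstep.trans ?_
  rw [lintegral_indicator measurableSet_Ioo]
  have hunion : Set.Ioo (-x) x = Set.Ioo (-x) 0 ∪ Set.Ico 0 x :=
    (Set.Ioo_union_Ico_eq_Ioo (by linarith) hx.le).symm
  rw [hunion, lintegral_union measurableSet_Ico
    (Set.disjoint_left.mpr fun u hu hu' => absurd hu.2 (not_lt.2 hu'.1))]
  have hIco : ∫⁻ u in Set.Ico (0:ℝ) x, ENNReal.ofReal (|u| ^ (-H))
      = ENNReal.ofReal (x ^ (1-H) / (1-H)) := by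
    rw [Measure.restrict_congr_set Ioo_ae_eq_Ico.symm]
    exact int_Ioo_rpow hH0 hH1 hx
  have hneg : ∫⁻ u in Set.Ioo (-x) (0:ℝ), ENNReal.ofReal (|u| ^ (-H))
      = ENNReal.ofReal (x ^ (1-H) / (1-H)) := by
    rw [← lintegral_indicator measurableSet_Ioo]
    have hmp : ∫⁻ u, (Set.Ioo (-x) (0:ℝ)).indicator
        (fun u => ENNReal.ofReal (|u| ^ (-H))) (-u)
        = ∫⁻ u, (Set.Ioo (-x) (0:ℝ)).indicator (fun u => ENNReal.ofReal (|u| ^ (-H))) u :=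
      (Measure.measurePreserving_neg (volume : Measure ℝ)).lintegral_comp
        (Measurable.indicator abs_meas measurableSet_Ioo)
    rw [← hmp]
    have heq : ∀ u : ℝ, (Set.Ioo (-x) (0:ℝ)).indicator
        (fun u => ENNReal.ofReal (|u| ^ (-H))) (-u)
        = (Set.Ioo (0:ℝ) x).indicator (fun u => ENNReal.ofReal (|u| ^ (-H))) u := by
      intro u
      simp only [Set.indicator_apply, Set.mem_Ioo, abs_neg]
      split_ifs with h1 h2 h3
      · rfl
      · exact absurd ⟨by linarith [h1.2], by linarith [h1.1]⟩ h2
      · exact absurd ⟨by linarith [h3.2], by linarith [h3.1]⟩ h1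
      · rfl
    simp_rw [heq]
    rw [lintegral_indicator measurableSet_Ioo]
    exact int_Ioo_rpow hH0 hH1 hx
  rw [hneg, hIco, ← ENNReal.ofReal_add
    (div_nonneg (Real.rpow_nonneg hx.le _) (by linarith))
    (div_nonneg (Real.rpow_nonneg hx.le _) (by linarith))]
  apply ENNReal.ofReal_le_ofReal
  rw [show x ^ (1-H) / (1-H) + x ^ (1-H) / (1-H) = 2/(1-H) * x^(1-H) by ring]

/-- For `H > 1/3`, the integral
`∫₀^∞∫₀^∞ (s₁s₂)^{H-1/2} (s₁^{2H}+|s₂-s₁|^{2H})^{-3/2} (1 ∨ √(s₁^{2H}+|s₂-s₁|^{2H}))^{-2} ds₁ ds₂`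
is finite. -/
theorem stmt4 (H : ℝ) (hH : 1 / 3 < H) (hH1 : H < 1) :
    (∫⁻ s in Set.Ioi (0 : ℝ) ×ˢ Set.Ioi (0 : ℝ),
      ENNReal.ofReal ((s.1 * s.2) ^ (H - 1 / 2)
        * (s.1 ^ (2 * H) + |s.2 - s.1| ^ (2 * H)) ^ (-(3 : ℝ) / 2)
        * (max 1 (Real.sqrt (s.1 ^ (2 * H) + |s.2 - s.1| ^ (2 * H)))) ^ (-(2 : ℝ)))) < ⊤ := by
  have hH0 : (0:ℝ) < H := by linarith
  set G1 : ℝ → ℝ≥0∞ := fun t => ENNReal.ofReal (gr H t) with hG1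
  have hG1meas : Measurable G1 := by unfold G1; unfold gr; fun_prop
  set c2 : ℝ → ℝ := fun x => 2 * (x ^ (-(1:ℝ)) * min 1 (x ^ (-(2*H)))) with hc2
  have hc2nn : ∀ x : ℝ, 0 < x → 0 ≤ c2 x := by
    intro x hx
    have h1 : (0:ℝ) ≤ x ^ (-(1:ℝ)) := Real.rpow_nonneg hx.le _
    have h2 : (0:ℝ) ≤ min 1 (x ^ (-(2*H))) := le_min zero_le_one (Real.rpow_nonneg hx.le _)
    unfold c2; positivity
  set S : Set (ℝ×ℝ) := {s | s.1/2 < s.2 ∧ s.2 < 2*s.1} with hS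
  have hSmeas : MeasurableSet S := by
    have : IsOpen S := by
      rw [hS, Set.setOf_and]
      exact (isOpen_lt (by fun_prop) (by fun_prop)).inter
        (isOpen_lt (by fun_prop) (by fun_prop))
    exact this.measurableSet
  set W : ℝ×ℝ → ℝ≥0∞ := fun s => ENNReal.ofReal (c2 s.1 * |s.2 - s.1| ^ (-H)) with hW
  have hWmeas : Measurable W := by unfold W c2; fun_prop
  set G : ℝ×ℝ → ℝ≥0∞ :=
    fun s => ENNReal.ofReal (16 * gr H s.1 * gr H s.2) + S.indicator W s with hG
  have hGmeas : Measurable G := by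
    show Measurable ((fun s : ℝ×ℝ => ENNReal.ofReal (16 * gr H s.1 * gr H s.2)) + S.indicator W)
    apply Measurable.add
    · unfold gr; fun_prop
    · exact hWmeas.indicator hSmeas
  -- pointwise bound
  have hpt : ∀ s : ℝ × ℝ, s ∈ Set.Ioi (0:ℝ) ×ˢ Set.Ioi (0:ℝ) →
      ENNReal.ofReal ((s.1 * s.2) ^ (H - 1 / 2)
        * (s.1 ^ (2 * H) + |s.2 - s.1| ^ (2 * H)) ^ (-(3 : ℝ) / 2)
        * (max 1 (Real.sqrt (s.1 ^ (2 * H) + |s.2 - s.1| ^ (2 * H)))) ^ (-(2 : ℝ))) ≤ G s := by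
    rintro ⟨x, y⟩ ⟨hx, hy⟩
    simp only [Set.mem_Ioi] at hx hy
    by_cases hmem : (x, y) ∈ S ∧ y ≠ x
    · have hb := keyC H x y hH0 hH1 hx hy hmem.1.1 hmem.1.2 hmem.2
      refine le_trans ?_ (le_add_self (a := S.indicator W (x, y)))
      rw [Set.indicator_of_mem hmem.1 W, hW]
      exact ENNReal.ofReal_le_ofReal (by simpa [hc2, mul_assoc] using hb)
    · have hcase : y ≤ x/2 ∨ 2*x ≤ y ∨ y = x := by
        by_cases hd : y = x
        · exact Or.inr (Or.inr hd)
        · have hnot : ¬ ((x, y) ∈ S) := fun h => hmem ⟨h, hd⟩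
          rw [hS] at hnot
          simp only [Set.mem_setOf_eq, not_and_or, not_lt] at hnot
          rcases hnot with h | h
          · exact Or.inl h
          · exact Or.inr (Or.inl h)
      have hb := keyAB H x y hH0 hH1 hx hy hcase
      exact le_trans (ENNReal.ofReal_le_ofReal hb) (self_le_add_right _ _)
  -- finiteness data
  have hK : (∫⁻ t in Set.Ioi (0:ℝ), G1 t) < ⊤ := by
    unfold G1; unfold gr
    exact aux_int_fin (by linarith) (by linarith)
  set K : ℝ≥0∞ := ∫⁻ t in Set.Ioi (0:ℝ), G1 t with hKdef
  -- inner integral bound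
  have hinner : ∀ x : ℝ, x ∈ Set.Ioi (0:ℝ) →
      (∫⁻ y in Set.Ioi (0:ℝ), G (x, y))
        ≤ ENNReal.ofReal (16 * gr H x) * K
          + ENNReal.ofReal (c2 x * (2/(1-H) * x ^ (1-H))) := by
    intro x hx
    simp only [Set.mem_Ioi] at hx
    have hgrnn : (0:ℝ) ≤ 16 * gr H x := by
      have h1 : (0:ℝ) ≤ x ^ (-((1+H)/2)) := Real.rpow_nonneg hx.le _
      have h2 : (0:ℝ) ≤ min 1 (x ^ (-H)) := le_min zero_le_one (Real.rpow_nonneg hx.le _)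
      unfold gr; positivity
    have hsplit : (∫⁻ y in Set.Ioi (0:ℝ), G (x, y))
        = (∫⁻ y in Set.Ioi (0:ℝ), ENNReal.ofReal (16 * gr H x * gr H y))
          + ∫⁻ y in Set.Ioi (0:ℝ), S.indicator W (x, y) := by
      rw [hG]
      exact lintegral_add_left (by unfold gr; fun_prop) _
    rw [hsplit]
    refine add_le_add ?_ ?_
    · have : ∀ y : ℝ, ENNReal.ofReal (16 * gr H x * gr H y)
          = ENNReal.ofReal (16 * gr H x) * G1 y := fun y => ENNReal.ofReal_mul hgrnn
      simp_rw [this]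
      rw [lintegral_const_mul _ hG1meas]
    · have hind : ∀ y : ℝ, S.indicator W (x, y)
          = (Set.Ioo (x/2) (2*x)).indicator
              (fun y => ENNReal.ofReal (c2 x) * ENNReal.ofReal (|y - x| ^ (-H))) y := by
        intro y
        rw [hW]
        simp only [Set.indicator_apply, Set.mem_Ioo, hS, Set.mem_setOf_eq]
        split_ifs with h
        · exact ENNReal.ofReal_mul (hc2nn x hx)
        · rfl
      simp_rw [hind]
      refine le_trans (setLIntegral_le_lintegral _ _) ?_
      have hconst : ∀ y : ℝ, (Set.Ioo (x/2) (2*x)).indicator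
            (fun y => ENNReal.ofReal (c2 x) * ENNReal.ofReal (|y - x| ^ (-H))) y
          = ENNReal.ofReal (c2 x) * (Set.Ioo (x/2) (2*x)).indicator
              (fun y => ENNReal.ofReal (|y - x| ^ (-H))) y := by
        intro y
        simp only [Set.indicator_apply]
        split_ifs
        · rfl
        · rw [mul_zero]
      simp_rw [hconst]
      rw [lintegral_const_mul _ ((by fun_prop : Measurable
        (fun y : ℝ => ENNReal.ofReal (|y - x| ^ (-H)))).indicator measurableSet_Ioo)]
      · rw [ENNReal.ofReal_mul (hc2nn x hx)]
        exact mul_le_mul_right (innerC hH0 hH1 hx) _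
  -- Tonelli
  have htonelli : (∫⁻ s in Set.Ioi (0:ℝ) ×ˢ Set.Ioi (0:ℝ), G s)
      = ∫⁻ x in Set.Ioi (0:ℝ), ∫⁻ y in Set.Ioi (0:ℝ), G (x, y) := by
    rw [Measure.volume_eq_prod, ← Measure.prod_restrict, lintegral_prod _ hGmeas.aemeasurable]
  -- outer bound
  have houter : (∫⁻ x in Set.Ioi (0:ℝ), ∫⁻ y in Set.Ioi (0:ℝ), G (x, y))
      ≤ (∫⁻ x in Set.Ioi (0:ℝ), ENNReal.ofReal (16 * gr H x) * K)
        + ∫⁻ x in Set.Ioi (0:ℝ), ENNReal.ofReal (c2 x * (2/(1-H) * x ^ (1-H))) := by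
    refine le_trans (setLIntegral_mono' measurableSet_Ioi hinner) ?_
    rw [lintegral_add_left (by unfold gr; fun_prop)]
  -- first outer piece
  have hfirst : (∫⁻ x in Set.Ioi (0:ℝ), ENNReal.ofReal (16 * gr H x) * K) < ⊤ := by
    have heq : ∀ x : ℝ, ENNReal.ofReal (16 * gr H x) * K
        = (ENNReal.ofReal 16 * K) * G1 x := by
      intro x
      rw [ENNReal.ofReal_mul (by norm_num)]
      ring
    simp_rw [heq]
    rw [lintegral_const_mul _ hG1meas]
    exact ENNReal.mul_lt_top (ENNReal.mul_lt_top ENNReal.ofReal_lt_top hK) hK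
  -- second outer piece
  have hsecond : (∫⁻ x in Set.Ioi (0:ℝ),
      ENNReal.ofReal (c2 x * (2/(1-H) * x ^ (1-H)))) < ⊤ := by
    have heq : ∫⁻ x in Set.Ioi (0:ℝ), ENNReal.ofReal (c2 x * (2/(1-H) * x ^ (1-H)))
        = ∫⁻ x in Set.Ioi (0:ℝ),
            ENNReal.ofReal (4/(1-H)) * ENNReal.ofReal (x ^ (-H) * min 1 (x ^ (-(2*H)))) := by
      refine setLIntegral_congr_fun measurableSet_Ioi (fun x hx => ?_)
      simp only [Set.mem_Ioi] at hx
      rw [← ENNReal.ofReal_mul (div_nonneg (by norm_num) (by linarith))]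
      congr 1
      rw [hc2]
      have hxx : x ^ (-(1:ℝ)) * x ^ (1-H) = x ^ (-H) := by
        rw [← Real.rpow_add hx]; congr 1; ring
      calc 2 * (x ^ (-(1:ℝ)) * min 1 (x ^ (-(2*H)))) * (2/(1-H) * x ^ (1-H))
          = 4/(1-H) * ((x ^ (-(1:ℝ)) * x ^ (1-H)) * min 1 (x ^ (-(2*H)))) := by ring
        _ = 4/(1-H) * (x ^ (-H) * min 1 (x ^ (-(2*H)))) := by rw [hxx]
    rw [heq, lintegral_const_mul _ (by fun_prop)]
    exact ENNReal.mul_lt_top ENNReal.ofReal_lt_top (aux_int_fin (by linarith) (by linarith))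
  -- conclude
  calc (∫⁻ s in Set.Ioi (0 : ℝ) ×ˢ Set.Ioi (0 : ℝ),
      ENNReal.ofReal ((s.1 * s.2) ^ (H - 1 / 2)
        * (s.1 ^ (2 * H) + |s.2 - s.1| ^ (2 * H)) ^ (-(3 : ℝ) / 2)
        * (max 1 (Real.sqrt (s.1 ^ (2 * H) + |s.2 - s.1| ^ (2 * H)))) ^ (-(2 : ℝ))))
      ≤ ∫⁻ s in Set.Ioi (0:ℝ) ×ˢ Set.Ioi (0:ℝ), G s :=
        setLIntegral_mono' (measurableSet_Ioi.prod measurableSet_Ioi) hpt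
    _ = ∫⁻ x in Set.Ioi (0:ℝ), ∫⁻ y in Set.Ioi (0:ℝ), G (x, y) := htonelli
    _ < ⊤ := lt_of_le_of_lt houter (ENNReal.add_lt_top.2 ⟨hfirst, hsecond⟩)
end

section
/- Let $f: \mathbb{R} \to \mathbb{R}$ be measurable with $\|f\|_w := \int_{\mathbb{R}} |f(x)|(1+|x|^w)\,dx < \infty$ for $w = a$ and $w = b$, where $a, b, c, \sigma > 0$. Then there is a constant $C$ (depending only on $a,b,c$) such that $\int_{\mathbb{R}^3} |f(x) f(\tilde{x})| (1 \wedge |x\eta|)^a (1 \wedge |\eta \tilde{x}|)^b |\eta|^c e^{-\sigma^2 \eta^2} \, d\eta \, dx \, d\tilde{x} \le \frac{C}{\sigma^{1+c} (1 \vee \sigma)^{a+b}} \|f\|_a \|f\|_b$. -/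
open MeasureTheory Real Set

lemma aux_abs_rpow_exp {s : ℝ} (hs : -1 < s) :
    Integrable (fun x : ℝ => |x| ^ s * Real.exp (-x ^ 2)) := by
  have h0 : IntegrableOn (fun x : ℝ => |x| ^ s * Real.exp (-x ^ 2)) (Ioi 0) := by
    have := integrableOn_rpow_mul_exp_neg_mul_sq (b := 1) one_pos hs
    simp only [neg_mul, one_mul] at this
    exact this.congr_fun (fun x hx => by rw [abs_of_pos hx]) measurableSet_Ioi
  rw [← integrableOn_univ, ← Iio_union_Ici (a := (0 : ℝ)), integrableOn_union,
    integrableOn_Ici_iff_integrableOn_Ioi]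
  constructor
  · rw [← (Measure.measurePreserving_neg (volume : Measure ℝ)).integrableOn_comp_preimage
        (Homeomorph.neg ℝ).measurableEmbedding]
    simp only [Function.comp_def, abs_neg, neg_sq, neg_preimage, neg_Iio, neg_zero]
    exact h0
  · exact h0

lemma aux_k_int {p c : ℝ} (hp : 0 < p) (hc : 0 < c) :
    Integrable (fun u : ℝ => (1 + |u|) ^ p * (|u| ^ c * Real.exp (-u ^ 2))) := by
  have hmeas : Measurable (fun u : ℝ => (1 + |u|) ^ p * (|u| ^ c * Real.exp (-u ^ 2))) := by
    fun_prop
  apply Integrable.mono'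
    (g := fun u : ℝ => (2:ℝ)^p * (|u| ^ c * Real.exp (-u ^ 2))
      + (2:ℝ)^p * (|u| ^ (p + c) * Real.exp (-u ^ 2)))
    (((aux_abs_rpow_exp (by linarith)).const_mul _).add
      ((aux_abs_rpow_exp (by linarith)).const_mul _))
    hmeas.aestronglyMeasurable
  refine Filter.Eventually.of_forall fun u => ?_
  have h1 : (0:ℝ) ≤ |u| := abs_nonneg u
  have hb : (1:ℝ) + |u| ≤ 2 * max 1 |u| := by
    rcases le_total |u| 1 with h | h
    · rw [max_eq_left h]; linarith
    · rw [max_eq_right h]; linarith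
  have h2 : (1 + |u|) ^ p ≤ 2 ^ p * (1 + |u| ^ p) := by
    calc (1 + |u|) ^ p ≤ (2 * max 1 |u|) ^ p :=
          Real.rpow_le_rpow (by linarith) hb hp.le
      _ = 2 ^ p * (max 1 |u|) ^ p := Real.mul_rpow (by norm_num) (le_max_of_le_left zero_le_one)
      _ ≤ 2 ^ p * (1 + |u| ^ p) := by
          apply mul_le_mul_of_nonneg_left _ (Real.rpow_nonneg (by norm_num) p)
          rcases le_total |u| 1 with h | h
          · rw [max_eq_left h, Real.one_rpow]
            nlinarith [Real.rpow_nonneg h1 p]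
          · rw [max_eq_right h]; nlinarith
  have hnorm : ‖(1 + |u|) ^ p * (|u| ^ c * Real.exp (-u ^ 2))‖
      = (1 + |u|) ^ p * (|u| ^ c * Real.exp (-u ^ 2)) := by
    rw [Real.norm_eq_abs, abs_of_nonneg]
    positivity
  rw [hnorm]
  have h3 : |u| ^ p * |u| ^ c = |u| ^ (p + c) := (Real.rpow_add' h1 (by linarith)).symm
  calc (1 + |u|) ^ p * (|u| ^ c * Real.exp (-u ^ 2))
      ≤ 2 ^ p * (1 + |u| ^ p) * (|u| ^ c * Real.exp (-u ^ 2)) := by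
        apply mul_le_mul_of_nonneg_right h2; positivity
    _ = 2 ^ p * (|u| ^ c * Real.exp (-u ^ 2))
        + 2 ^ p * ((|u| ^ p * |u| ^ c) * Real.exp (-u ^ 2)) := by ring
    _ = 2 ^ p * (|u| ^ c * Real.exp (-u ^ 2))
        + 2 ^ p * (|u| ^ (p + c) * Real.exp (-u ^ 2)) := by rw [h3]

lemma aux_min_split {x η t : ℝ} (ht : 0 ≤ t) :
    min 1 |x * η| ^ t ≤ (1 + |x| ^ t) * min 1 |η| ^ t := by
  have hm : ∀ z : ℝ, (0:ℝ) ≤ min 1 |z| := fun z => le_min zero_le_one (abs_nonneg z)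
  have hxa : (0:ℝ) ≤ |x| ^ t := Real.rpow_nonneg (abs_nonneg x) t
  have hmt : (0:ℝ) ≤ min 1 |η| ^ t := Real.rpow_nonneg (hm _) t
  rcases le_total |x| 1 with h | h
  · have h1 : min 1 |x * η| ≤ min 1 |η| := by
      apply min_le_min le_rfl
      rw [abs_mul]
      have := mul_le_mul_of_nonneg_right h (abs_nonneg η)
      linarith
    have h2 : min 1 |x * η| ^ t ≤ min 1 |η| ^ t := Real.rpow_le_rpow (hm _) h1 ht
    have h3 : min 1 |η| ^ t ≤ (1 + |x| ^ t) * min 1 |η| ^ t := by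
      apply le_mul_of_one_le_left hmt
      linarith
    linarith
  · have h1 : min 1 |x * η| ≤ |x| * min 1 |η| := by
      rw [abs_mul]
      have e : |x| * min 1 |η| = min (|x| * 1) (|x| * |η|) := mul_min_of_nonneg _ _ (abs_nonneg x)
      rw [e, mul_one]
      exact min_le_min h le_rfl
    have h2 : min 1 |x * η| ^ t ≤ (|x| * min 1 |η|) ^ t :=
      Real.rpow_le_rpow (hm _) h1 ht
    have h3 : (|x| * min 1 |η|) ^ t = |x| ^ t * min 1 |η| ^ t :=
      Real.mul_rpow (abs_nonneg x) (hm _)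
    have h4 : |x| ^ t * min 1 |η| ^ t ≤ (1 + |x| ^ t) * min 1 |η| ^ t := by
      apply mul_le_mul_of_nonneg_right _ hmt
      linarith
    linarith [h2, h3 ▸ h2]

lemma aux_eta {a b c σ : ℝ} (hab : 0 < a + b) (hc : 0 < c) (hσ : 0 < σ) :
    ∫⁻ η : ℝ, ENNReal.ofReal (min 1 |η| ^ (a + b) * (|η| ^ c * Real.exp (-(σ ^ 2 * η ^ 2))))
      ≤ ENNReal.ofReal ((∫ u : ℝ, (1 + |u|) ^ (a + b) * (|u| ^ c * Real.exp (-u ^ 2)))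
          / (σ ^ (1 + c) * (max 1 σ) ^ (a + b))) := by
  have hm : ∀ z : ℝ, (0:ℝ) ≤ min 1 |z| := fun z => le_min zero_le_one (abs_nonneg z)
  have hmaxpos : (0:ℝ) < max 1 σ := lt_of_lt_of_le one_pos (le_max_left _ _)
  have hmp : (0:ℝ) < (max 1 σ) ^ (a + b) := Real.rpow_pos_of_pos hmaxpos _
  have hσc : (0:ℝ) < σ ^ c := Real.rpow_pos_of_pos hσ c
  have hP1 : ∀ η : ℝ, min 1 |η| ^ (a + b) * (|η| ^ c * Real.exp (-(σ ^ 2 * η ^ 2)))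
      ≤ ((max 1 σ) ^ (a + b))⁻¹ * (σ ^ c)⁻¹
        * ((1 + |σ * η|) ^ (a + b) * (|σ * η| ^ c * Real.exp (-(σ * η) ^ 2))) := by
    intro η
    have e2 : Real.exp (-(σ ^ 2 * η ^ 2)) = Real.exp (-(σ * η) ^ 2) := by ring_nf
    have e1 : |σ * η| ^ c = σ ^ c * |η| ^ c := by
      rw [abs_mul, abs_of_pos hσ, Real.mul_rpow hσ.le (abs_nonneg _)]
    have e1' : |η| ^ c = (σ ^ c)⁻¹ * |σ * η| ^ c := by
      rw [e1]; field_simp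
    have b0 : min 1 |η| * max 1 σ ≤ 1 + |σ * η| := by
      rcases le_total σ 1 with h | h
      · rw [max_eq_left h]
        nlinarith [abs_nonneg (σ * η), min_le_left 1 |η|]
      · rw [max_eq_right h, abs_mul, abs_of_pos hσ]
        nlinarith [min_le_right 1 |η|, hm η]
    have e3 : min 1 |η| ^ (a + b) ≤ ((max 1 σ) ^ (a + b))⁻¹ * (1 + |σ * η|) ^ (a + b) := by
      have t1 : (min 1 |η| * max 1 σ) ^ (a + b) ≤ (1 + |σ * η|) ^ (a + b) :=
        Real.rpow_le_rpow (mul_nonneg (hm η) hmaxpos.le) b0 hab.le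
      rw [Real.mul_rpow (hm η) hmaxpos.le] at t1
      rw [inv_mul_eq_div, le_div_iff₀ hmp]
      exact t1
    calc min 1 |η| ^ (a + b) * (|η| ^ c * Real.exp (-(σ ^ 2 * η ^ 2)))
        = min 1 |η| ^ (a + b) * ((σ ^ c)⁻¹ * (|σ * η| ^ c * Real.exp (-(σ * η) ^ 2))) := by
          rw [e2, e1']; ring
      _ ≤ (((max 1 σ) ^ (a + b))⁻¹ * (1 + |σ * η|) ^ (a + b))
            * ((σ ^ c)⁻¹ * (|σ * η| ^ c * Real.exp (-(σ * η) ^ 2))) := by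
          apply mul_le_mul_of_nonneg_right e3
          positivity
      _ = ((max 1 σ) ^ (a + b))⁻¹ * (σ ^ c)⁻¹
            * ((1 + |σ * η|) ^ (a + b) * (|σ * η| ^ c * Real.exp (-(σ * η) ^ 2))) := by ring
  have hHint : Integrable (fun η : ℝ => ((max 1 σ) ^ (a + b))⁻¹ * (σ ^ c)⁻¹
      * ((1 + |σ * η|) ^ (a + b) * (|σ * η| ^ c * Real.exp (-(σ * η) ^ 2)))) := by
    exact ((aux_k_int hab hc).comp_mul_left' hσ.ne').const_mul _
  have hHeq : (∫ η : ℝ, ((max 1 σ) ^ (a + b))⁻¹ * (σ ^ c)⁻¹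
      * ((1 + |σ * η|) ^ (a + b) * (|σ * η| ^ c * Real.exp (-(σ * η) ^ 2))))
      = (∫ u : ℝ, (1 + |u|) ^ (a + b) * (|u| ^ c * Real.exp (-u ^ 2)))
          / (σ ^ (1 + c) * (max 1 σ) ^ (a + b)) := by
    rw [MeasureTheory.integral_const_mul]
    have h2 := MeasureTheory.Measure.integral_comp_mul_left
      (fun u : ℝ => (1 + |u|) ^ (a + b) * (|u| ^ c * Real.exp (-u ^ 2))) σ
    simp only [smul_eq_mul] at h2
    rw [h2, abs_of_pos (inv_pos.mpr hσ), Real.rpow_add hσ, Real.rpow_one,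
      div_eq_mul_inv, mul_inv, mul_inv]
    ring
  calc ∫⁻ η : ℝ, ENNReal.ofReal (min 1 |η| ^ (a + b) * (|η| ^ c * Real.exp (-(σ ^ 2 * η ^ 2))))
      ≤ ∫⁻ η : ℝ, ENNReal.ofReal (((max 1 σ) ^ (a + b))⁻¹ * (σ ^ c)⁻¹
          * ((1 + |σ * η|) ^ (a + b) * (|σ * η| ^ c * Real.exp (-(σ * η) ^ 2)))) :=
        lintegral_mono fun η => ENNReal.ofReal_le_ofReal (hP1 η)
    _ = ENNReal.ofReal ((∫ u : ℝ, (1 + |u|) ^ (a + b) * (|u| ^ c * Real.exp (-u ^ 2)))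
          / (σ ^ (1 + c) * (max 1 σ) ^ (a + b))) := by
        rw [← hHeq]
        exact (ofReal_integral_eq_lintegral_ofReal hHint
          (Filter.Eventually.of_forall fun η => by positivity)).symm

/-- For `a, b, c > 0` there is a constant `C` such that for every `σ > 0` and every
measurable `f` with `‖f‖_a, ‖f‖_b < ∞`,
`∫ |f(x)f(x̃)| (1∧|xη|)^a (1∧|ηx̃|)^b |η|^c e^{-σ²η²} dη dx dx̃
  ≤ C σ^{-(1+c)} (1∨σ)^{-(a+b)} ‖f‖_a ‖f‖_b`. -/
theorem stmt5 (a b c : ℝ) (ha : 0 < a) (hb : 0 < b) (hc : 0 < c) :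
    ∃ C : ℝ, 0 < C ∧ ∀ σ : ℝ, 0 < σ → ∀ f : ℝ → ℝ, Measurable f →
      Integrable (fun x => |f x| * (1 + |x| ^ a)) →
      Integrable (fun x => |f x| * (1 + |x| ^ b)) →
      (∫⁻ p : ℝ × ℝ × ℝ,
        ENNReal.ofReal (|f p.2.1 * f p.2.2| * (min 1 |p.2.1 * p.1|) ^ a
          * (min 1 |p.1 * p.2.2|) ^ b * |p.1| ^ c * Real.exp (-(σ ^ 2 * p.1 ^ 2))))
      ≤ ENNReal.ofReal (C / (σ ^ (1 + c) * (max 1 σ) ^ (a + b))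
          * (∫ x, |f x| * (1 + |x| ^ a)) * (∫ x, |f x| * (1 + |x| ^ b))) := by
  have hab : 0 < a + b := by linarith
  have hm : ∀ z : ℝ, (0:ℝ) ≤ min 1 |z| := fun z => le_min zero_le_one (abs_nonneg z)
  refine ⟨(∫ u : ℝ, (1 + |u|) ^ (a + b) * (|u| ^ c * Real.exp (-u ^ 2))) + 1, ?_,
    fun σ hσ f hf hInt1 hInt2 => ?_⟩
  · have hK0 : 0 ≤ ∫ u : ℝ, (1 + |u|) ^ (a + b) * (|u| ^ c * Real.exp (-u ^ 2)) :=
      integral_nonneg fun u => by positivity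
    linarith
  have hK0 : 0 ≤ ∫ u : ℝ, (1 + |u|) ^ (a + b) * (|u| ^ c * Real.exp (-u ^ 2)) :=
    integral_nonneg fun u => by positivity
  have hmaxpos : (0:ℝ) < max 1 σ := lt_of_lt_of_le one_pos (le_max_left _ _)
  have hD : (0:ℝ) < σ ^ (1 + c) * (max 1 σ) ^ (a + b) :=
    mul_pos (Real.rpow_pos_of_pos hσ _) (Real.rpow_pos_of_pos hmaxpos _)
  -- pointwise bound
  have key : ∀ η x y : ℝ,
      |f x * f y| * min 1 |x * η| ^ a * min 1 |η * y| ^ b * |η| ^ c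
          * Real.exp (-(σ ^ 2 * η ^ 2))
        ≤ (min 1 |η| ^ (a + b) * (|η| ^ c * Real.exp (-(σ ^ 2 * η ^ 2))))
          * ((|f x| * (1 + |x| ^ a)) * (|f y| * (1 + |y| ^ b))) := by
    intro η x y
    have h1 : min 1 |x * η| ^ a ≤ (1 + |x| ^ a) * min 1 |η| ^ a := aux_min_split ha.le
    have h2 : min 1 |η * y| ^ b ≤ (1 + |y| ^ b) * min 1 |η| ^ b := by
      rw [mul_comm η y]; exact aux_min_split hb.le
    have h3 : min 1 |η| ^ a * min 1 |η| ^ b = min 1 |η| ^ (a + b) :=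
      (Real.rpow_add' (hm η) (by linarith)).symm
    have hprod : min 1 |x * η| ^ a * min 1 |η * y| ^ b
        ≤ ((1 + |x| ^ a) * min 1 |η| ^ a) * ((1 + |y| ^ b) * min 1 |η| ^ b) := by
      apply mul_le_mul h1 h2 (Real.rpow_nonneg (hm _) b)
      have := Real.rpow_nonneg (abs_nonneg x) a
      have := Real.rpow_nonneg (hm η) a
      nlinarith
    calc |f x * f y| * min 1 |x * η| ^ a * min 1 |η * y| ^ b * |η| ^ c
          * Real.exp (-(σ ^ 2 * η ^ 2))
        = (|f x| * |f y| * (|η| ^ c * Real.exp (-(σ ^ 2 * η ^ 2))))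
            * (min 1 |x * η| ^ a * min 1 |η * y| ^ b) := by
          rw [abs_mul]; ring
      _ ≤ (|f x| * |f y| * (|η| ^ c * Real.exp (-(σ ^ 2 * η ^ 2))))
            * (((1 + |x| ^ a) * min 1 |η| ^ a) * ((1 + |y| ^ b) * min 1 |η| ^ b)) := by
          apply mul_le_mul_of_nonneg_left hprod
          positivity
      _ = (min 1 |η| ^ a * min 1 |η| ^ b) * (|η| ^ c * Real.exp (-(σ ^ 2 * η ^ 2)))
            * ((|f x| * (1 + |x| ^ a)) * (|f y| * (1 + |y| ^ b))) := by ring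
      _ = (min 1 |η| ^ (a + b) * (|η| ^ c * Real.exp (-(σ ^ 2 * η ^ 2))))
            * ((|f x| * (1 + |x| ^ a)) * (|f y| * (1 + |y| ^ b))) := by rw [h3]
  -- measurability
  have hhm : Measurable fun η : ℝ =>
      min 1 |η| ^ (a + b) * (|η| ^ c * Real.exp (-(σ ^ 2 * η ^ 2))) := by fun_prop
  have hg1m : Measurable fun x : ℝ => |f x| * (1 + |x| ^ a) := by fun_prop
  have hg2m : Measurable fun x : ℝ => |f x| * (1 + |x| ^ b) := by fun_prop
  calc (∫⁻ p : ℝ × ℝ × ℝ,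
        ENNReal.ofReal (|f p.2.1 * f p.2.2| * (min 1 |p.2.1 * p.1|) ^ a
          * (min 1 |p.1 * p.2.2|) ^ b * |p.1| ^ c * Real.exp (-(σ ^ 2 * p.1 ^ 2))))
      ≤ ∫⁻ p : ℝ × ℝ × ℝ,
        ENNReal.ofReal (min 1 |p.1| ^ (a + b) * (|p.1| ^ c * Real.exp (-(σ ^ 2 * p.1 ^ 2))))
          * (ENNReal.ofReal (|f p.2.1| * (1 + |p.2.1| ^ a))
            * ENNReal.ofReal (|f p.2.2| * (1 + |p.2.2| ^ b))) := by
        apply lintegral_mono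
        intro p
        dsimp only
        rw [← ENNReal.ofReal_mul (by positivity), ← ENNReal.ofReal_mul (by positivity)]
        exact ENNReal.ofReal_le_ofReal (key p.1 p.2.1 p.2.2)
    _ = (∫⁻ η : ℝ, ENNReal.ofReal (min 1 |η| ^ (a + b) * (|η| ^ c * Real.exp (-(σ ^ 2 * η ^ 2)))))
          * ((∫⁻ x : ℝ, ENNReal.ofReal (|f x| * (1 + |x| ^ a)))
            * (∫⁻ x : ℝ, ENNReal.ofReal (|f x| * (1 + |x| ^ b)))) := by
        have m2 : Measurable (fun q : ℝ × ℝ => ENNReal.ofReal (|f q.1| * (1 + |q.1| ^ a))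
            * ENNReal.ofReal (|f q.2| * (1 + |q.2| ^ b))) := by fun_prop
        rw [Measure.volume_eq_prod,
          lintegral_prod_mul hhm.ennreal_ofReal.aemeasurable m2.aemeasurable]
        congr 1
        rw [Measure.volume_eq_prod, lintegral_prod_mul hg1m.ennreal_ofReal.aemeasurable
          hg2m.ennreal_ofReal.aemeasurable]
    _ ≤ ENNReal.ofReal ((∫ u : ℝ, (1 + |u|) ^ (a + b) * (|u| ^ c * Real.exp (-u ^ 2)))
            / (σ ^ (1 + c) * (max 1 σ) ^ (a + b)))
          * (ENNReal.ofReal (∫ x, |f x| * (1 + |x| ^ a))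
            * ENNReal.ofReal (∫ x, |f x| * (1 + |x| ^ b))) := by
        apply mul_le_mul' (aux_eta hab hc hσ)
        rw [← ofReal_integral_eq_lintegral_ofReal hInt1
            (Filter.Eventually.of_forall fun x => by positivity),
          ← ofReal_integral_eq_lintegral_ofReal hInt2
            (Filter.Eventually.of_forall fun x => by positivity)]
    _ ≤ ENNReal.ofReal (((∫ u : ℝ, (1 + |u|) ^ (a + b) * (|u| ^ c * Real.exp (-u ^ 2))) + 1)
          / (σ ^ (1 + c) * (max 1 σ) ^ (a + b))
          * (∫ x, |f x| * (1 + |x| ^ a)) * (∫ x, |f x| * (1 + |x| ^ b))) := by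
        have hI1 : 0 ≤ ∫ x, |f x| * (1 + |x| ^ a) := integral_nonneg fun x => by positivity
        have hI2 : 0 ≤ ∫ x, |f x| * (1 + |x| ^ b) := integral_nonneg fun x => by positivity
        rw [← ENNReal.ofReal_mul hI1, ← ENNReal.ofReal_mul (div_nonneg hK0 hD.le)]
        apply ENNReal.ofReal_le_ofReal
        have hd : (∫ u : ℝ, (1 + |u|) ^ (a + b) * (|u| ^ c * Real.exp (-u ^ 2)))
            / (σ ^ (1 + c) * (max 1 σ) ^ (a + b))
            ≤ ((∫ u : ℝ, (1 + |u|) ^ (a + b) * (|u| ^ c * Real.exp (-u ^ 2))) + 1)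
            / (σ ^ (1 + c) * (max 1 σ) ^ (a + b)) := by
          gcongr
          linarith
        have := mul_le_mul_of_nonneg_right (mul_le_mul_of_nonneg_right hd hI1) hI2
        rw [← mul_assoc]
        exact this
end

section
/- Let $f: \mathbb{R} \to \mathbb{R}$ be measurable with $\|f\|_a := \int_{\mathbb{R}} |f(x)|(1+|x|^a)\,dx < \infty$, where $a, c, \sigma > 0$. Then there is a constant $C$ (depending only on $a,c$) such that $\int_{\mathbb{R}^2} |f(x)| (1 \wedge |x\eta|)^a |\eta|^c e^{-\sigma^2 \eta^2} \, d\eta \, dx \le \frac{C}{\sigma^{1+c}(1 \vee \sigma)^a} \|f\|_a$. -/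
open MeasureTheory Real Set

lemma integrable_abs_rpow_mul_exp_neg_mul_sq {b : ℝ} (hb : 0 < b) {s : ℝ} (hs : -1 < s) :
    Integrable fun x : ℝ => |x| ^ s * Real.exp (-b * x ^ 2) := by
  rw [← integrableOn_univ, ← @Iio_union_Ici _ _ (0 : ℝ), integrableOn_union,
    integrableOn_Ici_iff_integrableOn_Ioi]
  have hIoi : IntegrableOn (fun x : ℝ => |x| ^ s * Real.exp (-b * x ^ 2)) (Ioi 0) := by
    refine (integrableOn_rpow_mul_exp_neg_mul_sq hb hs).congr_fun (fun x hx => ?_) measurableSet_Ioi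
    rw [abs_of_pos hx]
  refine ⟨?_, hIoi⟩
  rw [← (Measure.measurePreserving_neg (volume : Measure ℝ)).integrableOn_comp_preimage
      (Homeomorph.neg ℝ).measurableEmbedding]
  simp only [Function.comp_def, neg_sq, neg_preimage, neg_Iio, neg_neg, neg_zero, abs_neg]
  exact hIoi.congr_set_ae (Filter.EventuallyEq.refl _ _)

/-- For `a, c > 0` there is a constant `C` such that for every `σ > 0` and every
measurable `f` with `‖f‖_a < ∞`,
`∫ |f(x)| (1∧|xη|)^a |η|^c e^{-σ²η²} dη dx ≤ C σ^{-(1+c)} (1∨σ)^{-a} ‖f‖_a`. -/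
theorem stmt6 (a c : ℝ) (ha : 0 < a) (hc : 0 < c) :
    ∃ C : ℝ, 0 < C ∧ ∀ σ : ℝ, 0 < σ → ∀ f : ℝ → ℝ, Measurable f →
      Integrable (fun x => |f x| * (1 + |x| ^ a)) →
      (∫⁻ p : ℝ × ℝ,
        ENNReal.ofReal (|f p.2| * (min 1 |p.2 * p.1|) ^ a * |p.1| ^ c
          * Real.exp (-(σ ^ 2 * p.1 ^ 2))))
      ≤ ENNReal.ofReal (C / (σ ^ (1 + c) * (max 1 σ) ^ a)
          * ∫ x, |f x| * (1 + |x| ^ a)) := by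
  set K : ℝ → ℝ := fun u => (1 + |u| ^ a) * (|u| ^ c * Real.exp (-1 * u ^ 2)) with hKdef
  have hKmeas : Measurable K := by
    apply Measurable.mul
    · exact (measurable_const.add ((measurable_id.abs).pow_const a))
    · exact ((measurable_id.abs).pow_const c).mul (by fun_prop)
  have hKnonneg : ∀ u, 0 ≤ K u := fun u => by positivity
  have hKint : Integrable K := by
    have h1 : Integrable fun u : ℝ => |u| ^ c * Real.exp (-1 * u ^ 2) :=
      integrable_abs_rpow_mul_exp_neg_mul_sq one_pos (by linarith)
    have h2 : Integrable fun u : ℝ => |u| ^ (a + c) * Real.exp (-1 * u ^ 2) :=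
      integrable_abs_rpow_mul_exp_neg_mul_sq one_pos (by linarith)
    have : Integrable fun u : ℝ =>
        |u| ^ c * Real.exp (-1 * u ^ 2) + |u| ^ (a + c) * Real.exp (-1 * u ^ 2) := h1.add h2
    refine this.congr (Filter.Eventually.of_forall fun u => ?_)
    simp only [hKdef]
    rw [Real.rpow_add' (abs_nonneg u) (by positivity)]
    ring
  set I : ℝ := ∫ u, K u with hIdef
  have hI0 : 0 ≤ I := integral_nonneg hKnonneg
  refine ⟨I + 1, by linarith, fun σ hσ f hf hfi => ?_⟩
  set F : ℝ → ℝ := fun x => |f x| * (1 + |x| ^ a) with hFdef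
  set G : ℝ → ℝ := fun η => (1 + |σ * η| ^ a) * (|η| ^ c * Real.exp (-(σ ^ 2 * η ^ 2))) with hGdef
  have hmaxpos : (0:ℝ) < (max 1 σ) ^ a := rpow_pos_of_pos (lt_of_lt_of_le one_pos (le_max_left _ _)) a
  -- pointwise bound
  have key : ∀ x η : ℝ, (min 1 |x * η|) ^ a ≤ ((max 1 σ) ^ a)⁻¹ * ((1 + |x| ^ a) * (1 + |σ * η| ^ a)) := by
    intro x η
    have hx0 : (0:ℝ) ≤ |x| ^ a := rpow_nonneg (abs_nonneg _) _
    have hη0 : (0:ℝ) ≤ |σ * η| ^ a := rpow_nonneg (abs_nonneg _) _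
    rcases le_total σ 1 with h | h
    · rw [max_eq_left h, one_rpow, inv_one, one_mul]
      have h1 : (min 1 |x * η|) ^ a ≤ 1 :=
        Real.rpow_le_one (le_min zero_le_one (abs_nonneg _)) (min_le_left _ _) ha.le
      nlinarith
    · rw [max_eq_right h]
      have hσa : (0:ℝ) < σ ^ a := rpow_pos_of_pos hσ a
      have h1 : (min 1 |x * η|) ^ a ≤ |x * η| ^ a :=
        Real.rpow_le_rpow (le_min zero_le_one (abs_nonneg _)) (min_le_right _ _) ha.le
      have h2 : |x * η| ^ a * σ ^ a = |x| ^ a * |σ * η| ^ a := by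
        rw [← Real.mul_rpow (abs_nonneg _) hσ.le, ← Real.mul_rpow (abs_nonneg _) (abs_nonneg _)]
        congr 1
        rw [abs_mul, abs_mul, abs_of_pos hσ]
        ring
      have h3 : |x * η| ^ a = (σ ^ a)⁻¹ * (|x| ^ a * |σ * η| ^ a) := by
        field_simp
        rw [mul_comm η σ]; linarith [h2]
      calc (min 1 |x * η|) ^ a ≤ |x * η| ^ a := h1
        _ = (σ ^ a)⁻¹ * (|x| ^ a * |σ * η| ^ a) := h3
        _ ≤ (σ ^ a)⁻¹ * ((1 + |x| ^ a) * (1 + |σ * η| ^ a)) := by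
            apply mul_le_mul_of_nonneg_left _ (inv_nonneg.mpr hσa.le)
            nlinarith
  -- pointwise bound on the integrand
  have ptwise : ∀ p : ℝ × ℝ,
      ENNReal.ofReal (|f p.2| * (min 1 |p.2 * p.1|) ^ a * |p.1| ^ c
        * Real.exp (-(σ ^ 2 * p.1 ^ 2)))
      ≤ ENNReal.ofReal (((max 1 σ) ^ a)⁻¹) * (ENNReal.ofReal (G p.1) * ENNReal.ofReal (F p.2)) := by
    intro ⟨η, x⟩
    rw [← ENNReal.ofReal_mul (by positivity), ← ENNReal.ofReal_mul (by positivity)]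
    apply ENNReal.ofReal_le_ofReal
    have hnn : (0:ℝ) ≤ |f x| * (|η| ^ c * Real.exp (-(σ ^ 2 * η ^ 2))) := by positivity
    calc |f x| * (min 1 |x * η|) ^ a * |η| ^ c * Real.exp (-(σ ^ 2 * η ^ 2))
        = (|f x| * (|η| ^ c * Real.exp (-(σ ^ 2 * η ^ 2)))) * (min 1 |x * η|) ^ a := by ring
      _ ≤ (|f x| * (|η| ^ c * Real.exp (-(σ ^ 2 * η ^ 2)))) *
            (((max 1 σ) ^ a)⁻¹ * ((1 + |x| ^ a) * (1 + |σ * η| ^ a))) :=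
          mul_le_mul_of_nonneg_left (key x η) hnn
      _ = ((max 1 σ) ^ a)⁻¹ * (G η * F x) := by simp only [hGdef, hFdef]; ring
  calc (∫⁻ p : ℝ × ℝ, ENNReal.ofReal (|f p.2| * (min 1 |p.2 * p.1|) ^ a * |p.1| ^ c
          * Real.exp (-(σ ^ 2 * p.1 ^ 2))))
      ≤ ∫⁻ p : ℝ × ℝ, ENNReal.ofReal (((max 1 σ) ^ a)⁻¹) *
          (ENNReal.ofReal (G p.1) * ENNReal.ofReal (F p.2)) := lintegral_mono ptwise
    _ = ENNReal.ofReal (((max 1 σ) ^ a)⁻¹) *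
          ∫⁻ p : ℝ × ℝ, ENNReal.ofReal (G p.1) * ENNReal.ofReal (F p.2) := lintegral_const_mul' _ _ (by simp)
    _ = ENNReal.ofReal (((max 1 σ) ^ a)⁻¹) *
          ((∫⁻ η, ENNReal.ofReal (G η)) * ∫⁻ x, ENNReal.ofReal (F x)) := by
        congr 1
        rw [Measure.volume_eq_prod]
        exact lintegral_prod_mul
          ((ENNReal.measurable_ofReal.comp (show Measurable G by fun_prop)).aemeasurable)
          ((ENNReal.measurable_ofReal.comp
            (show Measurable F from hf.abs.mul (by fun_prop))).aemeasurable)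
    _ ≤ ENNReal.ofReal ((I + 1) / (σ ^ (1 + c) * (max 1 σ) ^ a)
          * ∫ x, |f x| * (1 + |x| ^ a)) := by
        -- compute the η-integral by scaling
        have hGK : ∀ η, G η = (σ ^ c)⁻¹ * K (σ * η) := by
          intro η
          simp only [hGdef, hKdef]
          have h1 : |σ * η| ^ c = σ ^ c * |η| ^ c := by
            rw [abs_mul, abs_of_pos hσ, Real.mul_rpow hσ.le (abs_nonneg _)]
          have h2 : Real.exp (-1 * (σ * η) ^ 2) = Real.exp (-(σ ^ 2 * η ^ 2)) := by
            congr 1; ring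
          rw [h1, h2]
          field_simp [ne_of_gt (rpow_pos_of_pos hσ c)]
        have hmap : ∫⁻ η, ENNReal.ofReal (K (σ * η)) = ENNReal.ofReal σ⁻¹ * ∫⁻ u, ENNReal.ofReal (K u) := by
          have hm := lintegral_map (μ := (volume : Measure ℝ))
            (f := fun u => ENNReal.ofReal (K u)) (g := fun u => σ * u)
            (ENNReal.measurable_ofReal.comp hKmeas) (measurable_const_mul σ)
          rw [Real.map_volume_mul_left (ne_of_gt hσ), lintegral_smul_measure,
            abs_of_pos (inv_pos.mpr hσ)] at hm
          rw [← hm, smul_eq_mul]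
        have hGint : (∫⁻ η, ENNReal.ofReal (G η))
            = ENNReal.ofReal ((σ ^ c)⁻¹) * (ENNReal.ofReal σ⁻¹ * ENNReal.ofReal I) := by
          simp_rw [hGK, ENNReal.ofReal_mul (inv_nonneg.mpr (rpow_pos_of_pos hσ c).le)]
          rw [lintegral_const_mul' _ _ (by simp), hmap,
            ofReal_integral_eq_lintegral_ofReal hKint (Filter.Eventually.of_forall hKnonneg)]
        have hFint : (∫⁻ x, ENNReal.ofReal (F x)) = ENNReal.ofReal (∫ x, F x) :=
          (ofReal_integral_eq_lintegral_ofReal hfi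
            (Filter.Eventually.of_forall fun x => by positivity)).symm
        rw [hGint, hFint]
        rw [← ENNReal.ofReal_mul (by positivity), ← ENNReal.ofReal_mul (by positivity),
          ← ENNReal.ofReal_mul (by positivity), ← ENNReal.ofReal_mul (by positivity)]
        apply ENNReal.ofReal_le_ofReal
        have hF0 : (0:ℝ) ≤ ∫ x, F x := integral_nonneg fun x => by positivity
        have hσc : (0:ℝ) < σ ^ c := rpow_pos_of_pos hσ c
        have hs1c : σ ^ (1 + c) = σ * σ ^ c := by
          rw [Real.rpow_add hσ, Real.rpow_one]
        have hFeq : (∫ x, |f x| * (1 + |x| ^ a)) = ∫ x, F x := rfl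
        rw [hFeq, hs1c, div_eq_mul_inv, mul_inv, mul_inv]
        calc ((max 1 σ) ^ a)⁻¹ * ((σ ^ c)⁻¹ * (σ⁻¹ * I) * ∫ x, F x)
            = I * (σ⁻¹ * (σ ^ c)⁻¹ * ((max 1 σ) ^ a)⁻¹ * ∫ x, F x) := by ring
          _ ≤ (I + 1) * (σ⁻¹ * (σ ^ c)⁻¹ * ((max 1 σ) ^ a)⁻¹ * ∫ x, F x) :=
              mul_le_mul_of_nonneg_right (by linarith)
                (mul_nonneg (by positivity) hF0)
          _ = (I + 1) * (σ⁻¹ * (σ ^ c)⁻¹ * ((max 1 σ) ^ a)⁻¹) * ∫ x, F x := by ring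
end

section
/- Let $H \in (0, 1/2)$ and for $0 < s \le t$ define $K_H(t,s) := \mathcal{C}_H [ (t/s)^{H-1/2} (t-s)^{H-1/2} - (H-1/2) s^{1/2-H} \int_s^t u^{H-3/2} (u-s)^{H-1/2} \, du ]$ with $\mathcal{C}_H > 0$. Then for all $0 < s \le t$: $\mathcal{C}_H [ (t/s)^{H-1/2}(t-s)^{H-1/2} + \frac{1/2-H}{1/2+H} t^{-1} (t/s)^{H-1/2} (t-s)^{H+1/2} ] \le K_H(t,s) \le \mathcal{C}_H [ (t/s)^{H-1/2}(t-s)^{H-1/2} + \frac{1/2-H}{1/2+H} s^{-1} (t-s)^{H+1/2} ]$. -/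
open MeasureTheory intervalIntegral Real

/-- Bounds for the fBm Volterra kernel when `H < 1/2`. -/
theorem stmt8 (H CH : ℝ) (hH0 : 0 < H) (hH : H < 1 / 2) (hCH : 0 < CH)
    (K : ℝ → ℝ → ℝ)
    (hK : ∀ s t : ℝ, 0 < s → s ≤ t →
      K t s = CH * ((t / s) ^ (H - 1 / 2) * (t - s) ^ (H - 1 / 2)
        - (H - 1 / 2) * s ^ ((1 : ℝ) / 2 - H)
          * ∫ u in s..t, u ^ (H - 3 / 2) * (u - s) ^ (H - 1 / 2))) :
    ∀ s t : ℝ, 0 < s → s ≤ t →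
      CH * ((t / s) ^ (H - 1 / 2) * (t - s) ^ (H - 1 / 2)
          + (1 / 2 - H) / (1 / 2 + H) * t⁻¹ * (t / s) ^ (H - 1 / 2)
            * (t - s) ^ (H + 1 / 2))
        ≤ K t s ∧
      K t s ≤ CH * ((t / s) ^ (H - 1 / 2) * (t - s) ^ (H - 1 / 2)
          + (1 / 2 - H) / (1 / 2 + H) * s⁻¹ * (t - s) ^ (H + 1 / 2)) := by
  intro s t hs hst
  rcases eq_or_lt_of_le hst with rfl | hlt
  · rw [hK s s hs le_rfl]
    have h1 : (0:ℝ) ^ (H - 1 / 2) = 0 := Real.zero_rpow (by intro h; simp at h; linarith)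
    have h2 : (0:ℝ) ^ (H + 1 / 2) = 0 := Real.zero_rpow (by positivity)
    simp only [sub_self, intervalIntegral.integral_same, h1, h2, mul_zero, zero_mul,
      add_zero, sub_zero, le_refl, and_self]
  · have ht : 0 < t := hs.trans hlt
    have hts : 0 < t - s := by linarith
    have hp : H - 1 / 2 < 0 := by linarith
    have hp1 : (0 : ℝ) < H + 1 / 2 := by linarith
    -- the basic integral
    set J : ℝ := (t - s) ^ (H + 1 / 2) / (H + 1 / 2) with hJdef
    have hJ : (∫ u in s..t, (u - s) ^ (H - 1 / 2)) = J := by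
      rw [show (fun u : ℝ => (u - s) ^ (H - 1 / 2)) = fun u : ℝ =>
        (fun x : ℝ => x ^ (H - 1 / 2)) (u - s) from rfl,
        intervalIntegral.integral_comp_sub_right (fun x : ℝ => x ^ (H - 1 / 2)) s,
        integral_rpow (Or.inl (by linarith)), sub_self,
        Real.zero_rpow (ne_of_gt (by linarith : (0:ℝ) < H - 1 / 2 + 1)),
        show H - 1 / 2 + 1 = H + 1 / 2 by ring]
      simp [hJdef]
    have hJint : IntervalIntegrable (fun u : ℝ => (u - s) ^ (H - 1 / 2)) volume s t := by
      have := (intervalIntegrable_rpow' (a := s - s) (b := t - s)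
        (by linarith : (-1 : ℝ) < H - 1 / 2)).comp_sub_right s
      simpa using this
    -- integrability of the integrand
    have hmeas : ContinuousOn (fun u : ℝ => u ^ (H - 3 / 2) * (u - s) ^ (H - 1 / 2))
        (Set.Ioc s t) :=
      (continuousOn_id.rpow_const fun x hx => Or.inl (ne_of_gt (hs.trans hx.1))).mul
        ((continuousOn_id.sub continuousOn_const).rpow_const fun x hx =>
          Or.inl (sub_ne_zero.2 (ne_of_gt hx.1)))
    have hg : IntervalIntegrable
        (fun u : ℝ => u ^ (H - 3 / 2) * (u - s) ^ (H - 1 / 2)) volume s t := by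
      rw [intervalIntegrable_iff_integrableOn_Ioc_of_le hst]
      have hb : IntegrableOn (fun u : ℝ => s ^ (H - 3 / 2) * (u - s) ^ (H - 1 / 2))
          (Set.Ioc s t) volume := by
        have := (hJint.const_mul (s ^ (H - 3 / 2)))
        rwa [intervalIntegrable_iff_integrableOn_Ioc_of_le hst] at this
      refine hb.mono' (hmeas.aestronglyMeasurable measurableSet_Ioc) ?_
      filter_upwards [ae_restrict_mem measurableSet_Ioc] with u hu
      have hsu : s < u := hu.1
      have hu0 : 0 < u := hs.trans hsu
      rw [Real.norm_eq_abs, abs_of_nonneg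
        (mul_nonneg (Real.rpow_nonneg hu0.le _) (Real.rpow_nonneg (by linarith) _))]
      exact mul_le_mul_of_nonneg_right
        (Real.rpow_le_rpow_of_nonpos hs hsu.le (by linarith))
        (Real.rpow_nonneg (by linarith) _)
    set I : ℝ := ∫ u in s..t, u ^ (H - 3 / 2) * (u - s) ^ (H - 1 / 2) with hIdef
    have hup : I ≤ s ^ (H - 3 / 2) * J := by
      calc I ≤ ∫ u in s..t, s ^ (H - 3 / 2) * (u - s) ^ (H - 1 / 2) := by
              refine intervalIntegral.integral_mono_on hst hg (hJint.const_mul _) ?_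
              intro u hu
              exact mul_le_mul_of_nonneg_right
                (Real.rpow_le_rpow_of_nonpos hs hu.1 (by linarith))
                (Real.rpow_nonneg (by linarith [hu.1]) _)
        _ = s ^ (H - 3 / 2) * J := by rw [intervalIntegral.integral_const_mul, hJ]
    have hlo : t ^ (H - 3 / 2) * J ≤ I := by
      calc t ^ (H - 3 / 2) * J = ∫ u in s..t, t ^ (H - 3 / 2) * (u - s) ^ (H - 1 / 2) := by
              rw [intervalIntegral.integral_const_mul, hJ]
        _ ≤ I := by
              refine intervalIntegral.integral_mono_on hst (hJint.const_mul _) hg ?_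
              intro u hu
              have hu0 : 0 < u := lt_of_lt_of_le hs hu.1
              exact mul_le_mul_of_nonneg_right
                (Real.rpow_le_rpow_of_nonpos hu0 hu.2 (by linarith))
                (Real.rpow_nonneg (by linarith [hu.1]) _)
    have hdiv : (t / s) ^ (H - 1 / 2) = t ^ (H - 1 / 2) * s ^ ((1 : ℝ) / 2 - H) := by
      rw [Real.div_rpow ht.le hs.le, div_eq_mul_inv, ← Real.rpow_neg hs.le,
        show -(H - 1 / 2) = 1 / 2 - H by ring]
    have ht2 : t⁻¹ * t ^ (H - 1 / 2) = t ^ (H - 3 / 2) := by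
      rw [← Real.rpow_neg_one t, ← Real.rpow_add ht,
        show (-1 : ℝ) + (H - 1 / 2) = H - 3 / 2 by ring]
    have hs2 : s ^ ((1 : ℝ) / 2 - H) * s ^ (H - 3 / 2) = s⁻¹ := by
      rw [← Real.rpow_add hs, show (1 : ℝ) / 2 - H + (H - 3 / 2) = -1 by ring,
        Real.rpow_neg_one]
    have hsnn : (0 : ℝ) ≤ s ^ ((1 : ℝ) / 2 - H) := Real.rpow_nonneg hs.le _
    have hc : (0 : ℝ) ≤ 1 / 2 - H := by linarith
    rw [hK s t hs hst, ← hIdef]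
    constructor
    · apply mul_le_mul_of_nonneg_left _ hCH.le
      have key : (1 / 2 - H) / (1 / 2 + H) * t⁻¹ * (t / s) ^ (H - 1 / 2)
          * (t - s) ^ (H + 1 / 2)
          = (1 / 2 - H) * s ^ ((1 : ℝ) / 2 - H) * (t ^ (H - 3 / 2) * J) := by
        rw [hdiv, hJdef, show (1 / 2 - H) / (1 / 2 + H) * t⁻¹
            * (t ^ (H - 1 / 2) * s ^ ((1 : ℝ) / 2 - H)) * (t - s) ^ (H + 1 / 2)
          = (1 / 2 - H) / (1 / 2 + H) * (t⁻¹ * t ^ (H - 1 / 2))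
            * s ^ ((1 : ℝ) / 2 - H) * (t - s) ^ (H + 1 / 2) by ring, ht2]
        field_simp
        ring
      have h1 : (1 / 2 - H) * s ^ ((1 : ℝ) / 2 - H) * (t ^ (H - 3 / 2) * J)
          ≤ (1 / 2 - H) * s ^ ((1 : ℝ) / 2 - H) * I :=
        mul_le_mul_of_nonneg_left hlo (by positivity)
      nlinarith [key, h1]
    · apply mul_le_mul_of_nonneg_left _ hCH.le
      have key : (1 / 2 - H) / (1 / 2 + H) * s⁻¹ * (t - s) ^ (H + 1 / 2)
          = (1 / 2 - H) * s ^ ((1 : ℝ) / 2 - H) * (s ^ (H - 3 / 2) * J) := by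
        rw [hJdef, show (1 / 2 - H) * s ^ ((1 : ℝ) / 2 - H)
            * (s ^ (H - 3 / 2) * ((t - s) ^ (H + 1 / 2) / (H + 1 / 2)))
          = (1 / 2 - H) * (s ^ ((1 : ℝ) / 2 - H) * s ^ (H - 3 / 2))
            * ((t - s) ^ (H + 1 / 2) / (H + 1 / 2)) by ring, hs2]
        field_simp
        ring
      have h1 : (1 / 2 - H) * s ^ ((1 : ℝ) / 2 - H) * I
          ≤ (1 / 2 - H) * s ^ ((1 : ℝ) / 2 - H) * (s ^ (H - 3 / 2) * J) :=
        mul_le_mul_of_nonneg_left hup (by positivity)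
      nlinarith [key, h1]
end

section
/- Let $H \in (1/2,1)$, $\mathcal{C}_H > 0$, and define $K_H(t,s) := \mathcal{C}_H s^{1/2-H} \int_s^t (u-s)^{H-3/2} u^{H-1/2} \, du$ for $0 < s \le t$, and $\mu_{r, r+s/n} := \int_r^{r+s/n} K_H(r+s/n, \theta)^2 \, d\theta$. Then for all $r > 0$, $s \ge 0$, $n \ge 1$: $\frac{\mathcal{C}_H^2 s^{2H}}{2H (H-1/2)^2} \le n^{2H} \mu_{r, r+s/n} \le \frac{\mathcal{C}_H^2 s^{2H}}{2H (H-1/2)^2} \left(1 + \frac{s}{rn}\right)^{2H-1}$. -/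
open MeasureTheory Set

lemma aux_alg2 (c D h S : ℝ) : c / D * S / h = c * S / (h * D) := by
  rw [div_eq_mul_inv, div_eq_mul_inv, div_eq_mul_inv, mul_inv]; ring

lemma aux_alg3 (c D h a b S : ℝ) : c / D * a * b * S / h = c * S / (h * D) * (a * b) := by
  rw [div_eq_mul_inv, div_eq_mul_inv, div_eq_mul_inv, mul_inv]; ring

lemma aux_int_pow (p : ℝ) (hp : -1 < p) (θ t : ℝ) :
    ∫ u in θ..t, (u - θ) ^ p = (t - θ) ^ (p + 1) / (p + 1) := by
  rw [intervalIntegral.integral_comp_sub_right (fun x => x ^ p) θ, sub_self,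
    integral_rpow (Or.inl hp), Real.zero_rpow (by linarith), sub_zero]

lemma aux_sq_rpow (x q : ℝ) (hx : 0 ≤ x) : (x ^ q) ^ 2 = x ^ (q * 2) := by
  rw [← Real.rpow_natCast (x ^ q) 2, ← Real.rpow_mul hx]
  norm_num

lemma aux_integrable (p q θ t : ℝ) (hp : -1 < p) (hq : 0 ≤ q) :
    IntervalIntegrable (fun u => (u - θ) ^ p * u ^ q) MeasureTheory.volume θ t := by
  have h1 : IntervalIntegrable (fun u => (u - θ) ^ p) MeasureTheory.volume θ t := by
    have := (intervalIntegral.intervalIntegrable_rpow' (a := θ - θ) (b := t - θ) hp).comp_sub_right θ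
    simpa using this
  exact h1.mul_continuousOn (ContinuousOn.rpow_const continuousOn_id fun x _ => Or.inr hq)

lemma aux_inner (H θ t : ℝ) (hH : 1/2 < H) (hθ : 0 < θ) (hθt : θ ≤ t) :
    θ ^ (H - 1/2) * ((t - θ) ^ (H - 1/2) / (H - 1/2))
      ≤ (∫ u in θ..t, (u - θ) ^ (H - 3/2) * u ^ (H - 1/2)) ∧
    (∫ u in θ..t, (u - θ) ^ (H - 3/2) * u ^ (H - 1/2))
      ≤ t ^ (H - 1/2) * ((t - θ) ^ (H - 1/2) / (H - 1/2)) := by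
  have hp : (-1 : ℝ) < H - 3/2 := by linarith
  have hq : (0:ℝ) ≤ H - 1/2 := by linarith
  have hbase : ∫ u in θ..t, (u - θ) ^ (H - 3/2) = (t - θ) ^ (H - 1/2) / (H - 1/2) := by
    have := aux_int_pow (H - 3/2) hp θ t
    rw [this]; norm_num [show H - 3/2 + 1 = H - 1/2 by ring]
  have hint := aux_integrable (H - 3/2) (H - 1/2) θ t hp hq
  have hintc : ∀ c : ℝ, IntervalIntegrable (fun u => (u - θ) ^ (H - 3/2) * c)
      MeasureTheory.volume θ t := fun c => by
    have := (intervalIntegral.intervalIntegrable_rpow' (a := θ - θ) (b := t - θ) hp).comp_sub_right θ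
    simpa using this.mul_const c
  constructor
  · calc θ ^ (H - 1/2) * ((t - θ) ^ (H - 1/2) / (H - 1/2))
        = ∫ u in θ..t, (u - θ) ^ (H - 3/2) * θ ^ (H - 1/2) := by
          rw [intervalIntegral.integral_mul_const, hbase]; ring
      _ ≤ ∫ u in θ..t, (u - θ) ^ (H - 3/2) * u ^ (H - 1/2) := by
          apply intervalIntegral.integral_mono_on hθt (hintc _) hint
          intro u hu
          exact mul_le_mul_of_nonneg_left
            (Real.rpow_le_rpow hθ.le hu.1 hq) (Real.rpow_nonneg (by linarith [hu.1]) _)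
  · calc (∫ u in θ..t, (u - θ) ^ (H - 3/2) * u ^ (H - 1/2))
        ≤ ∫ u in θ..t, (u - θ) ^ (H - 3/2) * t ^ (H - 1/2) := by
          apply intervalIntegral.integral_mono_on hθt hint (hintc _)
          intro u hu
          exact mul_le_mul_of_nonneg_left
            (Real.rpow_le_rpow (by linarith [hu.1]) hu.2 hq) (Real.rpow_nonneg (by linarith [hu.1]) _)
      _ = t ^ (H - 1/2) * ((t - θ) ^ (H - 1/2) / (H - 1/2)) := by
          rw [intervalIntegral.integral_mul_const, hbase]; ring

/-- Bounds on `n^{2H} μ_{r, r+s/n}` for the fBm Volterra kernel, `H > 1/2`. -/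
theorem stmt9 (H CH : ℝ) (hH : 1 / 2 < H) (hH1 : H < 1) (hCH : 0 < CH)
    (K : ℝ → ℝ → ℝ)
    (hK : ∀ s t : ℝ, 0 < s → s ≤ t →
      K t s = CH * s ^ ((1 : ℝ) / 2 - H)
        * ∫ u in s..t, (u - s) ^ (H - 3 / 2) * u ^ (H - 1 / 2)) :
    ∀ (r s : ℝ) (n : ℕ), 0 < r → 0 ≤ s → 1 ≤ n →
      CH ^ 2 * s ^ (2 * H) / (2 * H * (H - 1 / 2) ^ 2)
          ≤ (n : ℝ) ^ (2 * H)
            * ∫ θ in r..(r + s / (n : ℝ)), (K (r + s / (n : ℝ)) θ) ^ 2 ∧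
      (n : ℝ) ^ (2 * H) * ∫ θ in r..(r + s / (n : ℝ)), (K (r + s / (n : ℝ)) θ) ^ 2
          ≤ CH ^ 2 * s ^ (2 * H) / (2 * H * (H - 1 / 2) ^ 2)
            * (1 + s / (r * (n : ℝ))) ^ (2 * H - 1) := by
  intro r s n hr hs hn
  have hn0 : (0:ℝ) < (n:ℝ) := by exact_mod_cast Nat.lt_of_lt_of_le Nat.zero_lt_one hn
  have hHp : (0:ℝ) < H - 1/2 := by linarith
  rcases eq_or_lt_of_le hs with hs0 | hs0
  · subst hs0
    simp [Real.zero_rpow (show (2:ℝ)*H ≠ 0 by positivity), intervalIntegral.integral_same]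
  set t := r + s / (n:ℝ) with htdef
  have hsn : 0 < s / (n:ℝ) := div_pos hs0 hn0
  have hrt : r < t := by simp only [htdef]; linarith
  have ht0 : 0 < t := by linarith
  set cL : ℝ := (CH / (H - 1/2)) ^ 2 with hcL
  set cU : ℝ := (CH / (H - 1/2)) ^ 2 * r ^ (1 - 2*H) * t ^ (2*H - 1) with hcU
  have hbound : ∀ θ ∈ Icc r t,
      cL * (t - θ) ^ (2*H - 1) ≤ K t θ ^ 2 ∧ K t θ ^ 2 ≤ cU * (t - θ) ^ (2*H - 1) := by
    intro θ hθ
    have hθ0 : 0 < θ := lt_of_lt_of_le hr hθ.1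
    have hθt : θ ≤ t := hθ.2
    have hKθ := hK θ t hθ0 hθt
    obtain ⟨hlo, hhi⟩ := aux_inner H θ t (by linarith) hθ0 hθt
    have hB0 : 0 ≤ (t - θ) ^ (H - 1/2) / (H - 1/2) :=
      div_nonneg (Real.rpow_nonneg (by linarith) _) hHp.le
    have hc0 : 0 ≤ CH * θ ^ ((1:ℝ)/2 - H) := by positivity
    have hLle : CH / (H - 1/2) * (t - θ) ^ (H - 1/2) ≤ K t θ := by
      rw [hKθ]
      calc CH / (H - 1/2) * (t - θ) ^ (H - 1/2)
          = CH * θ ^ ((1:ℝ)/2 - H) * (θ ^ (H - 1/2) * ((t - θ) ^ (H - 1/2) / (H - 1/2))) := by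
            rw [show CH * θ ^ ((1:ℝ)/2 - H) * (θ ^ (H - 1/2) * ((t - θ) ^ (H - 1/2) / (H - 1/2)))
              = CH * (θ ^ ((1:ℝ)/2 - H) * θ ^ (H - 1/2)) * ((t - θ) ^ (H - 1/2) / (H - 1/2)) by ring,
              ← Real.rpow_add hθ0, show (1:ℝ)/2 - H + (H - 1/2) = 0 by ring, Real.rpow_zero]
            ring
        _ ≤ CH * θ ^ ((1:ℝ)/2 - H) * (∫ u in θ..t, (u - θ) ^ (H - 3/2) * u ^ (H - 1/2)) :=
            mul_le_mul_of_nonneg_left hlo hc0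
    have hUle : K t θ ≤ CH / (H - 1/2) * r ^ ((1:ℝ)/2 - H) * t ^ (H - 1/2) * (t - θ) ^ (H - 1/2) := by
      rw [hKθ]
      calc CH * θ ^ ((1:ℝ)/2 - H) * (∫ u in θ..t, (u - θ) ^ (H - 3/2) * u ^ (H - 1/2))
          ≤ CH * θ ^ ((1:ℝ)/2 - H) * (t ^ (H - 1/2) * ((t - θ) ^ (H - 1/2) / (H - 1/2))) :=
            mul_le_mul_of_nonneg_left hhi hc0
        _ ≤ CH * r ^ ((1:ℝ)/2 - H) * (t ^ (H - 1/2) * ((t - θ) ^ (H - 1/2) / (H - 1/2))) := by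
            apply mul_le_mul_of_nonneg_right _ (mul_nonneg (Real.rpow_nonneg ht0.le _) hB0)
            exact mul_le_mul_of_nonneg_left
              (Real.rpow_le_rpow_of_nonpos hr hθ.1 (by linarith)) hCH.le
        _ = CH / (H - 1/2) * r ^ ((1:ℝ)/2 - H) * t ^ (H - 1/2) * (t - θ) ^ (H - 1/2) := by
            ring
    have hL0 : 0 ≤ CH / (H - 1/2) * (t - θ) ^ (H - 1/2) :=
      mul_nonneg (div_nonneg hCH.le hHp.le) (Real.rpow_nonneg (by linarith) _)
    constructor
    · have h2 := pow_le_pow_left₀ hL0 hLle 2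
      calc cL * (t - θ) ^ (2*H - 1)
          = (CH / (H - 1/2) * (t - θ) ^ (H - 1/2)) ^ 2 := by
            rw [mul_pow, aux_sq_rpow _ _ (by linarith : (0:ℝ) ≤ t - θ),
              show (H - 1/2) * 2 = 2*H - 1 by ring]
        _ ≤ K t θ ^ 2 := h2
    · have hK0 : 0 ≤ K t θ := le_trans hL0 hLle
      have h2 := pow_le_pow_left₀ hK0 hUle 2
      calc K t θ ^ 2
          ≤ (CH / (H - 1/2) * r ^ ((1:ℝ)/2 - H) * t ^ (H - 1/2) * (t - θ) ^ (H - 1/2)) ^ 2 := h2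
        _ = cU * (t - θ) ^ (2*H - 1) := by
            rw [mul_pow, mul_pow, mul_pow, aux_sq_rpow _ _ (by linarith : (0:ℝ) ≤ t - θ),
              aux_sq_rpow _ _ hr.le, aux_sq_rpow _ _ ht0.le,
              show ((1:ℝ)/2 - H) * 2 = 1 - 2*H by ring,
              show (H - 1/2) * 2 = 2*H - 1 by ring, hcU]
  have hgcont : Continuous fun θ : ℝ => (t - θ) ^ (2*H - 1) := by
    rw [continuous_iff_continuousAt]
    intro x
    exact (Real.continuousAt_rpow_const _ _ (Or.inr (by linarith))).comp
      ((continuous_const.sub continuous_id).continuousAt)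
  have hintL : IntervalIntegrable (fun θ => cL * (t - θ) ^ (2*H - 1)) volume r t :=
    (continuous_const.mul hgcont).intervalIntegrable r t
  have hintU : IntervalIntegrable (fun θ => cU * (t - θ) ^ (2*H - 1)) volume r t :=
    (continuous_const.mul hgcont).intervalIntegrable r t
  have hjoint : Measurable (fun q : ℝ × ℝ =>
      (Set.Ioc q.1 t).indicator (fun u => (u - q.1) ^ (H - 3/2) * u ^ (H - 1/2)) q.2) := by
    have hset : MeasurableSet {q : ℝ × ℝ | q.1 < q.2 ∧ q.2 ≤ t} :=
      (measurableSet_lt measurable_fst measurable_snd).inter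
        (measurableSet_le measurable_snd measurable_const)
    have hf : Measurable (fun q : ℝ × ℝ => (q.2 - q.1) ^ (H - 3/2) * q.2 ^ (H - 1/2)) := by
      fun_prop
    have heq : (fun q : ℝ × ℝ =>
        (Set.Ioc q.1 t).indicator (fun u => (u - q.1) ^ (H - 3/2) * u ^ (H - 1/2)) q.2)
        = {q : ℝ × ℝ | q.1 < q.2 ∧ q.2 ≤ t}.indicator
            (fun q => (q.2 - q.1) ^ (H - 3/2) * q.2 ^ (H - 1/2)) := by
      ext q
      by_cases h : q.1 < q.2 ∧ q.2 ≤ t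
      · simp [Set.indicator_of_mem, Set.mem_Ioc, h.1, h.2, Set.mem_setOf_eq, h]
      · rw [Set.indicator_of_notMem (by simpa [Set.mem_Ioc] using h),
          Set.indicator_of_notMem (by simpa [Set.mem_setOf_eq] using h)]
    rw [heq]
    exact hf.indicator hset
  set M : ℝ → ℝ := fun θ => CH * θ ^ ((1:ℝ)/2 - H) *
      ∫ u, (Set.Ioc θ t).indicator (fun u => (u - θ) ^ (H - 3/2) * u ^ (H - 1/2)) u with hMdef
  have hMmeas : Measurable M := by
    apply Measurable.mul
    · fun_prop
    · exact (StronglyMeasurable.integral_prod_right' hjoint.stronglyMeasurable).measurable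
  have haeq : (fun θ => K t θ ^ 2) =ᵐ[volume.restrict (Set.Ioc r t)] (fun θ => M θ ^ 2) := by
    filter_upwards [ae_restrict_mem measurableSet_Ioc] with θ hθ
    have hθ0 : 0 < θ := lt_trans hr hθ.1
    rw [hK θ t hθ0 hθ.2, hMdef]
    simp only
    rw [intervalIntegral.integral_of_le hθ.2, ← integral_indicator measurableSet_Ioc]
  have hintK : IntervalIntegrable (fun θ => K t θ ^ 2) volume r t := by
    rw [intervalIntegrable_iff_integrableOn_Ioc_of_le hrt.le]
    refine Integrable.mono' hintU.1 ?_ ?_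
    · exact ((hMmeas.pow_const 2).aestronglyMeasurable).congr haeq.symm
    · filter_upwards [ae_restrict_mem measurableSet_Ioc] with θ hθ
      rw [Real.norm_eq_abs, abs_of_nonneg (sq_nonneg _)]
      exact (hbound θ (Ioc_subset_Icc_self hθ)).2
  have hIbase : ∫ θ in r..t, (t - θ) ^ (2*H - 1) = (t - r) ^ (2*H) / (2*H) := by
    rw [intervalIntegral.integral_comp_sub_left (fun x => x ^ (2*H - 1)) t, sub_self,
      integral_rpow (Or.inl (by linarith)), Real.zero_rpow (by linarith), sub_zero,
      show 2*H - 1 + 1 = 2*H by ring]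
  have hIL : ∫ θ in r..t, cL * (t - θ) ^ (2*H - 1) = cL * ((t - r) ^ (2*H) / (2*H)) := by
    rw [intervalIntegral.integral_const_mul, hIbase]
  have hIU : ∫ θ in r..t, cU * (t - θ) ^ (2*H - 1) = cU * ((t - r) ^ (2*H) / (2*H)) := by
    rw [intervalIntegral.integral_const_mul, hIbase]
  have hlow : cL * ((t - r) ^ (2*H) / (2*H)) ≤ ∫ θ in r..t, K t θ ^ 2 := by
    rw [← hIL]
    exact intervalIntegral.integral_mono_on hrt.le hintL hintK fun θ hθ => (hbound θ hθ).1
  have hup : (∫ θ in r..t, K t θ ^ 2) ≤ cU * ((t - r) ^ (2*H) / (2*H)) := by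
    rw [← hIU]
    exact intervalIntegral.integral_mono_on hrt.le hintK hintU fun θ hθ => (hbound θ hθ).2
  have htr : t - r = s / (n:ℝ) := by simp [htdef]
  have hnne : ((n:ℝ)) ^ (2*H) ≠ 0 := (Real.rpow_pos_of_pos hn0 _).ne'
  have hdiv : (s / (n:ℝ)) ^ (2*H) = s ^ (2*H) / (n:ℝ) ^ (2*H) := Real.div_rpow hs hn0.le _
  have hnn : (0:ℝ) ≤ (n:ℝ) ^ (2*H) := (Real.rpow_pos_of_pos hn0 _).le
  have hfrac : r ^ (1 - 2*H) * t ^ (2*H - 1) = (1 + s / (r * (n:ℝ))) ^ (2*H - 1) := by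
    have h1 : 1 + s / (r * (n:ℝ)) = t / r := by
      rw [htdef, add_div, div_self hr.ne', div_div, mul_comm (n:ℝ) r]
    rw [h1, Real.div_rpow ht0.le hr.le, show (1:ℝ) - 2*H = -(2*H - 1) by ring,
      Real.rpow_neg hr.le, div_eq_mul_inv]
    ring
  have h2H : (2*H) ≠ 0 := by positivity
  have cancel : ∀ X : ℝ, (n:ℝ)^(2*H) * (X * (s^(2*H) / (n:ℝ)^(2*H) / (2*H)))
      = X * s^(2*H) / (2*H) := by
    intro X
    field_simp
  rw [htr, hdiv] at hlow hup
  constructor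
  · calc CH ^ 2 * s ^ (2 * H) / (2 * H * (H - 1 / 2) ^ 2)
        = (n:ℝ) ^ (2*H) * (cL * (s^(2*H) / (n:ℝ)^(2*H) / (2*H))) := by
          rw [cancel, hcL, div_pow, aux_alg2]
      _ ≤ (n:ℝ) ^ (2*H) * ∫ θ in r..t, K t θ ^ 2 := mul_le_mul_of_nonneg_left hlow hnn
  · calc (n:ℝ) ^ (2*H) * ∫ θ in r..t, K t θ ^ 2
        ≤ (n:ℝ) ^ (2*H) * (cU * (s^(2*H) / (n:ℝ)^(2*H) / (2*H))) :=
          mul_le_mul_of_nonneg_left hup hnn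
      _ = CH ^ 2 * s ^ (2 * H) / (2 * H * (H - 1 / 2) ^ 2)
            * (1 + s / (r * (n:ℝ))) ^ (2 * H - 1) := by
          rw [cancel, hcU, div_pow, aux_alg3, hfrac]
end

section
/- Let $H \in (0,1/2)$, $\mathcal{C}_H > 0$, and let $K_H(t,s)$ be the fBm Volterra kernel for $H < 1/2$ (given by $K_H(t,s) = \mathcal{C}_H[(t/s)^{H-1/2}(t-s)^{H-1/2} - (H-1/2)s^{1/2-H}\int_s^t u^{H-3/2}(u-s)^{H-1/2}du]$). Define $\mu_{r, r+s/n} := \int_r^{r+s/n} K_H(r+s/n, \theta)^2 \, d\theta$. Then for all $r > 0$, $s \ge 0$, $n \ge 1$: $\frac{\mathcal{C}_H^2 s^{2H}}{2H} \le n^{2H} \mu_{r, r+s/n} \le \frac{\mathcal{C}_H^2 s^{2H}}{2H}\left(1 + \frac{1/2-H}{1/2+H} \cdot \frac{s}{rn}\right)^2$. -/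
open MeasureTheory Set intervalIntegral

private lemma stmt10_aux_int_sub_left {p r d : ℝ} (hp : -1 < p) (hrd : r ≤ d) :
    ∫ x in r..d, (d - x) ^ p = (d - r) ^ (p + 1) / (p + 1) := by
  rw [intervalIntegral.integral_comp_sub_left (fun x => x ^ p) d,
    integral_rpow (Or.inl hp), sub_self, Real.zero_rpow (by linarith), sub_zero]

private lemma stmt10_aux_ii_sub_left {p r d : ℝ} (hp : -1 < p) :
    IntervalIntegrable (fun x => (d - x) ^ p) volume r d := by
  simpa using ((intervalIntegral.intervalIntegrable_rpow' (a := 0) (b := d - r) hp).comp_sub_left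
    d).symm

private lemma stmt10_aux_ii_sub_right {p c t : ℝ} (hp : -1 < p) :
    IntervalIntegrable (fun x => (x - c) ^ p) volume c t := by
  simpa using (intervalIntegral.intervalIntegrable_rpow' (a := 0) (b := t - c) hp).comp_sub_right c

private lemma stmt10_aux_int_sub_right {p c t : ℝ} (hp : -1 < p) (hct : c ≤ t) :
    ∫ x in c..t, (x - c) ^ p = (t - c) ^ (p + 1) / (p + 1) := by
  rw [intervalIntegral.integral_comp_sub_right (fun x => x ^ p) c,
    integral_rpow (Or.inl hp), sub_self, Real.zero_rpow (by linarith), sub_zero]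


private lemma stmt10_alg_low {aa X Z Y W I CH : ℝ} (ha : aa < 0) (hCH : 0 ≤ CH)
    (hinv : X * Z = 1) (hIlow : W * ((Y - Z) / aa) ≤ I) (hX : 0 ≤ X) :
    CH * W ≤ CH * (Y * X * W - aa * X * I) := by
  apply mul_le_mul_of_nonneg_left _ hCH
  have hXn : 0 ≤ (-aa) * X := mul_nonneg (by linarith) hX
  have key : (-aa) * X * (W * ((Y - Z) / aa)) ≤ (-aa) * X * I :=
    mul_le_mul_of_nonneg_left hIlow hXn
  have e : (-aa) * X * (W * ((Y - Z) / aa)) = X * W * Z - X * W * Y := by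
    field_simp [ha.ne]
    ring
  have e2 : X * W * Z = W := by linear_combination W * hinv
  linarith [key]

private lemma stmt10_alg_up {aa X I W A P M c d d' CH : ℝ} (ha : aa < 0) (hCH : 0 ≤ CH)
    (hX : 0 ≤ X) (hW : 0 ≤ W) (hIup : I ≤ P)
    (heq : (-aa) * X * P = W * (c * d')) (hd : c * d' ≤ c * d)
    (hA : A ≤ W) (hM : M = 1 + c * d) :
    CH * (A - aa * X * I) ≤ CH * (W * M) := by
  apply mul_le_mul_of_nonneg_left _ hCH
  have hXn : 0 ≤ (-aa) * X := mul_nonneg (by linarith) hX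
  have k1 : (-aa) * X * I ≤ (-aa) * X * P := mul_le_mul_of_nonneg_left hIup hXn
  have k2 : W * (c * d') ≤ W * (c * d) := mul_le_mul_of_nonneg_left hd hW
  have : A - aa * X * I ≤ W + W * (c * d) := by nlinarith
  calc A - aa * X * I ≤ W + W * (c * d) := this
    _ = W * M := by rw [hM]; ring

/-- Bounds on `n^{2H} μ_{r, r+s/n}` for the fBm Volterra kernel, `H < 1/2`. -/
theorem stmt10 (H CH : ℝ) (hH0 : 0 < H) (hH : H < 1 / 2) (hCH : 0 < CH)
    (K : ℝ → ℝ → ℝ)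
    (hK : ∀ s t : ℝ, 0 < s → s ≤ t →
      K t s = CH * ((t / s) ^ (H - 1 / 2) * (t - s) ^ (H - 1 / 2)
        - (H - 1 / 2) * s ^ ((1 : ℝ) / 2 - H)
          * ∫ u in s..t, u ^ (H - 3 / 2) * (u - s) ^ (H - 1 / 2))) :
    ∀ (r s : ℝ) (n : ℕ), 0 < r → 0 ≤ s → 1 ≤ n →
      CH ^ 2 * s ^ (2 * H) / (2 * H)
          ≤ (n : ℝ) ^ (2 * H)
            * ∫ θ in r..(r + s / (n : ℝ)), (K (r + s / (n : ℝ)) θ) ^ 2 ∧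
      (n : ℝ) ^ (2 * H) * ∫ θ in r..(r + s / (n : ℝ)), (K (r + s / (n : ℝ)) θ) ^ 2
          ≤ CH ^ 2 * s ^ (2 * H) / (2 * H)
            * (1 + (1 / 2 - H) / (1 / 2 + H) * (s / (r * (n : ℝ)))) ^ 2 := by
  intro r s n hr hs hn
  have h2H : (0 : ℝ) < 2 * H := by linarith
  have hn0 : (0 : ℝ) < (n : ℝ) := by exact_mod_cast Nat.lt_of_lt_of_le Nat.zero_lt_one hn
  rcases hs.eq_or_lt with h0 | hs'
  · -- s = 0
    subst h0
    simp [Real.zero_rpow h2H.ne', intervalIntegral.integral_same]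
  -- s > 0
  set a : ℝ := H - 1 / 2 with ha_def
  set b : ℝ := H - 3 / 2 with hb_def
  have ha : a < 0 := by rw [ha_def]; linarith
  have ha1 : -1 < a := by rw [ha_def]; linarith
  have ha1' : (0:ℝ) < a + 1 := by linarith
  have hb1 : (-1:ℝ) ≠ b := by rw [hb_def]; intro h; linarith [h]
  set δ : ℝ := s / n with hδ_def
  have hδ : 0 < δ := div_pos hs' hn0
  set t : ℝ := r + δ with ht_def
  have hrt : r < t := by rw [ht_def]; linarith
  have ht0 : 0 < t := by linarith
  set c : ℝ := (1 / 2 - H) / (1 / 2 + H) with hc_def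
  have hc0 : 0 ≤ c := by
    rw [hc_def]; apply div_nonneg <;> linarith
  set M : ℝ := 1 + (1 / 2 - H) / (1 / 2 + H) * (s / (r * (n : ℝ))) with hM_def
  have hδr : c * (δ / r) = (1 / 2 - H) / (1 / 2 + H) * (s / (r * (n : ℝ))) := by
    rw [hc_def, hδ_def, div_div, mul_comm (n:ℝ) r]
  have hM1 : 1 ≤ M := by
    rw [hM_def, ← hδr]
    have : 0 ≤ c * (δ / r) := mul_nonneg hc0 (div_nonneg hδ.le hr.le)
    linarith
  -- pointwise bounds on the kernel
  have hKbound : ∀ θ ∈ Ioc r t,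
      CH * (t - θ) ^ a ≤ K t θ ∧ K t θ ≤ CH * (t - θ) ^ a * M := by
    rintro θ ⟨hθr, hθt⟩
    have hθ0 : 0 < θ := hr.trans hθr
    have hexp : (1 : ℝ) / 2 - H = -a := by rw [ha_def]; ring
    rw [hK θ t hθ0 hθt, hexp]
    rcases eq_or_lt_of_le hθt with hEq | hθt'
    · -- θ = t
      subst hEq
      simp [Real.zero_rpow ha.ne, intervalIntegral.integral_same, mul_nonneg hCH.le]
    -- θ < t
    have htθ : 0 < t - θ := by linarith
    set I : ℝ := ∫ u in θ..t, u ^ b * (u - θ) ^ a with hI_def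
    have h0uIcc : (0:ℝ) ∉ uIcc θ t := notMem_uIcc_of_lt hθ0 ht0
    -- integrability of the inner integrand
    have hII1 : IntegrableOn (fun u => (u - θ) ^ a) (Ioc θ t) volume :=
      (stmt10_aux_ii_sub_right (c := θ) (t := t) ha1).1
    have hIIb : IntegrableOn (fun u => u ^ b) (Ioc θ t) volume :=
      (intervalIntegral.intervalIntegrable_rpow (Or.inr h0uIcc)).1
    have hmes : Measurable fun u : ℝ => u ^ b * (u - θ) ^ a := by fun_prop
    have hII : IntegrableOn (fun u => u ^ b * (u - θ) ^ a) (Ioc θ t) volume := by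
      apply Integrable.mono' (g := fun u => θ ^ b * (u - θ) ^ a)
        (hII1.const_mul (θ ^ b)) (hmes.aestronglyMeasurable.restrict)
      refine (ae_restrict_iff' measurableSet_Ioc).2 (Filter.Eventually.of_forall ?_)
      rintro u ⟨hu1, hu2⟩
      have hu0 : 0 < u := hθ0.trans hu1
      rw [Real.norm_eq_abs, abs_of_nonneg
        (mul_nonneg (Real.rpow_nonneg hu0.le _) (Real.rpow_nonneg (by linarith) _))]
      exact mul_le_mul_of_nonneg_right
        (Real.rpow_le_rpow_of_nonpos hθ0 hu1.le (by rw [hb_def]; linarith))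
        (Real.rpow_nonneg (by linarith) _)
    -- value of ∫ u^b
    have hvb : ∫ u in θ..t, u ^ b = (t ^ a - θ ^ a) / a := by
      rw [integral_rpow (Or.inr ⟨Ne.symm hb1, h0uIcc⟩)]
      have : b + 1 = a := by rw [hb_def, ha_def]; ring
      rw [this]
    -- upper bound on I
    have hIup : I ≤ θ ^ b * ((t - θ) ^ (a + 1) / (a + 1)) := by
      rw [hI_def, intervalIntegral.integral_of_le hθt]
      have := setIntegral_mono_on hII (hII1.const_mul (θ ^ b)) measurableSet_Ioc
        (fun u hu => mul_le_mul_of_nonneg_right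
          (Real.rpow_le_rpow_of_nonpos hθ0 hu.1.le (by rw [hb_def]; linarith))
          (Real.rpow_nonneg (by linarith [hu.1]) _))
      refine this.trans_eq ?_
      rw [← intervalIntegral.integral_of_le hθt, intervalIntegral.integral_const_mul,
        stmt10_aux_int_sub_right ha1 hθt]
    -- lower bound on I
    have hIlow : (t - θ) ^ a * ((t ^ a - θ ^ a) / a) ≤ I := by
      rw [hI_def, intervalIntegral.integral_of_le hθt]
      have hle : ∀ u ∈ Ioc θ t, (t - θ) ^ a * u ^ b ≤ u ^ b * (u - θ) ^ a := by
        rintro u ⟨hu1, hu2⟩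
        rw [mul_comm]
        exact mul_le_mul_of_nonneg_left
          (Real.rpow_le_rpow_of_nonpos (by linarith) (by linarith) ha.le)
          (Real.rpow_nonneg (by linarith : (0:ℝ) ≤ u) _)
      have := setIntegral_mono_on (hIIb.const_mul ((t - θ) ^ a)) hII measurableSet_Ioc hle
      refine le_trans (le_of_eq ?_) this
      rw [← intervalIntegral.integral_of_le hθt, intervalIntegral.integral_const_mul, hvb]
    -- algebraic identities
    have hdiv : (t / θ) ^ a = t ^ a * θ ^ (-a) := by
      rw [Real.div_rpow ht0.le hθ0.le, Real.rpow_neg hθ0.le, div_eq_mul_inv]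
    have hinv : θ ^ (-a) * θ ^ a = 1 := by
      rw [← Real.rpow_add hθ0]; simp
    have hθa : 0 < θ ^ (-a) := Real.rpow_pos_of_pos hθ0 _
    have hta : 0 < t ^ a := Real.rpow_pos_of_pos ht0 _
    have htθa : 0 < (t - θ) ^ a := Real.rpow_pos_of_pos htθ _
    constructor
    · -- lower bound
      rw [hdiv]
      exact stmt10_alg_low ha hCH.le hinv hIlow hθa.le
    · -- upper bound
      have hA : (t / θ) ^ a * (t - θ) ^ a ≤ (t - θ) ^ a := by
        have h1 : (t / θ) ^ a ≤ 1 :=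
          Real.rpow_le_one_of_one_le_of_nonpos ((one_le_div hθ0).mpr hθt) ha.le
        calc (t / θ) ^ a * (t - θ) ^ a ≤ 1 * (t - θ) ^ a :=
              mul_le_mul_of_nonneg_right h1 htθa.le
          _ = (t - θ) ^ a := one_mul _
      have hpow1 : θ ^ (-a) * θ ^ b = θ⁻¹ := by
        rw [← Real.rpow_add hθ0]
        have hab : -a + b = -1 := by rw [ha_def, hb_def]; ring
        rw [hab, Real.rpow_neg_one]
      have hpow2 : (t - θ) ^ (a + 1) = (t - θ) ^ a * (t - θ) :=
        Real.rpow_add_one htθ.ne' a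
      have h12H : ((1:ℝ) / 2 + H) ≠ 0 := by positivity
      have heq : (-a) * θ ^ (-a) * (θ ^ b * ((t - θ) ^ (a + 1) / (a + 1)))
          = (t - θ) ^ a * (c * ((t - θ) / θ)) := by
        rw [hpow2]
        have hc' : c = (-a) / (a + 1) := by
          rw [hc_def, ha_def]
          rw [div_eq_div_iff h12H (by intro hcon; linarith)]
          ring
        rw [hc']
        linear_combination ((-a) / (a + 1) * (t - θ) ^ a * (t - θ)) * hpow1
      have h3 : c * ((t - θ) / θ) ≤ c * (δ / r) := by
        apply mul_le_mul_of_nonneg_left _ hc0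
        apply div_le_div₀ hδ.le (by rw [ht_def]; linarith) hr hθr.le
      have hfin := stmt10_alg_up ha hCH.le hθa.le htθa.le hIup heq h3 hA
        (hM_def.trans (by rw [← hδr]))
      exact hfin.trans_eq (mul_assoc CH _ M).symm
  -- measurability of the kernel on the relevant set
  have hG : Measurable fun θ : ℝ =>
      ∫ u, (if θ < u ∧ u ≤ t then u ^ b * (u - θ) ^ a else 0) := by
    have hm : Measurable fun p : ℝ × ℝ =>
        (if p.1 < p.2 ∧ p.2 ≤ t then p.2 ^ b * (p.2 - p.1) ^ a else 0) := by
      apply Measurable.ite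
      · exact (measurableSet_lt measurable_fst measurable_snd).inter
          (measurableSet_le measurable_snd measurable_const)
      · fun_prop
      · fun_prop
    exact (hm.stronglyMeasurable.integral_prod_right').measurable
  have hF : Measurable fun θ : ℝ => CH * ((t / θ) ^ a * (t - θ) ^ a
      - a * θ ^ ((1:ℝ) / 2 - H)
        * ∫ u, (if θ < u ∧ u ≤ t then u ^ b * (u - θ) ^ a else 0)) := by
    fun_prop
  have hKF : ∀ θ ∈ Ioc r t, K t θ = CH * ((t / θ) ^ a * (t - θ) ^ a
      - a * θ ^ ((1:ℝ) / 2 - H)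
        * ∫ u, (if θ < u ∧ u ≤ t then u ^ b * (u - θ) ^ a else 0)) := by
    rintro θ ⟨hθr, hθt⟩
    have hθ0 : 0 < θ := hr.trans hθr
    have hint : (∫ u in θ..t, u ^ b * (u - θ) ^ a)
        = ∫ u, (if θ < u ∧ u ≤ t then u ^ b * (u - θ) ^ a else 0) := by
      rw [intervalIntegral.integral_of_le hθt,
        ← MeasureTheory.integral_indicator measurableSet_Ioc]
      congr 1
      ext u
      simp [Set.indicator_apply, Set.mem_Ioc]
    rw [hK θ t hθ0 hθt, hint]
  have haesm : AEStronglyMeasurable (fun θ => (K t θ) ^ 2)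
      (volume.restrict (Ioc r t)) := by
    have h1 : AEStronglyMeasurable (K t) (volume.restrict (Ioc r t)) := by
      apply (hF.aestronglyMeasurable.restrict).congr
      refine ((ae_restrict_iff' measurableSet_Ioc).2 (Filter.Eventually.of_forall ?_))
      intro θ hθ
      exact (hKF θ hθ).symm
    exact h1.pow 2
  have h2H1 : (-1 : ℝ) < 2 * H - 1 := by linarith
  have hsq : ∀ x : ℝ, 0 ≤ x → (x ^ a) ^ 2 = x ^ (2 * H - 1) := by
    intro x hx
    have haa : a + a = 2 * H - 1 := by rw [ha_def]; ring
    rw [sq, ← Real.rpow_add' hx (by rw [haa]; intro hcon; linarith), haa]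
  have hbound : IntegrableOn (fun θ => CH ^ 2 * M ^ 2 * (t - θ) ^ (2 * H - 1))
      (Ioc r t) volume :=
    ((stmt10_aux_ii_sub_left h2H1).1).const_mul _
  have hlowint : IntegrableOn (fun θ => CH ^ 2 * (t - θ) ^ (2 * H - 1))
      (Ioc r t) volume :=
    ((stmt10_aux_ii_sub_left h2H1).1).const_mul _
  have hIntK2 : IntegrableOn (fun θ => (K t θ) ^ 2) (Ioc r t) volume := by
    apply Integrable.mono' hbound haesm
    refine (ae_restrict_iff' measurableSet_Ioc).2 (Filter.Eventually.of_forall ?_)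
    intro θ hθ
    obtain ⟨hlo, hup⟩ := hKbound θ hθ
    have htθ0 : 0 ≤ t - θ := by linarith [hθ.2]
    have h0 : 0 ≤ K t θ :=
      le_trans (mul_nonneg hCH.le (Real.rpow_nonneg htθ0 _)) hlo
    rw [Real.norm_eq_abs, abs_of_nonneg (sq_nonneg _)]
    calc (K t θ) ^ 2 ≤ (CH * (t - θ) ^ a * M) ^ 2 := pow_le_pow_left₀ h0 hup 2
      _ = CH ^ 2 * M ^ 2 * (t - θ) ^ (2 * H - 1) := by
          rw [mul_pow, mul_pow, hsq _ htθ0]; ring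
  have hVlow : ∫ θ in Ioc r t, CH ^ 2 * (t - θ) ^ (2 * H - 1)
      ≤ ∫ θ in Ioc r t, (K t θ) ^ 2 := by
    apply setIntegral_mono_on hlowint hIntK2 measurableSet_Ioc
    intro θ hθ
    obtain ⟨hlo, _⟩ := hKbound θ hθ
    have htθ0 : 0 ≤ t - θ := by linarith [hθ.2]
    calc CH ^ 2 * (t - θ) ^ (2 * H - 1) = (CH * (t - θ) ^ a) ^ 2 := by
          rw [mul_pow, hsq _ htθ0]
      _ ≤ (K t θ) ^ 2 :=
          pow_le_pow_left₀ (mul_nonneg hCH.le (Real.rpow_nonneg htθ0 _)) hlo 2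
  have hVup : ∫ θ in Ioc r t, (K t θ) ^ 2
      ≤ ∫ θ in Ioc r t, CH ^ 2 * M ^ 2 * (t - θ) ^ (2 * H - 1) := by
    apply setIntegral_mono_on hIntK2 hbound measurableSet_Ioc
    intro θ hθ
    obtain ⟨hlo, hup⟩ := hKbound θ hθ
    have htθ0 : 0 ≤ t - θ := by linarith [hθ.2]
    have h0 : 0 ≤ K t θ :=
      le_trans (mul_nonneg hCH.le (Real.rpow_nonneg htθ0 _)) hlo
    calc (K t θ) ^ 2 ≤ (CH * (t - θ) ^ a * M) ^ 2 := pow_le_pow_left₀ h0 hup 2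
      _ = CH ^ 2 * M ^ 2 * (t - θ) ^ (2 * H - 1) := by
          rw [mul_pow, mul_pow, hsq _ htθ0]; ring
  have hval : ∫ θ in Ioc r t, (t - θ) ^ (2 * H - 1) = δ ^ (2 * H) / (2 * H) := by
    rw [← intervalIntegral.integral_of_le hrt.le, stmt10_aux_int_sub_left h2H1 hrt.le]
    have h1 : 2 * H - 1 + 1 = 2 * H := by ring
    have h2 : t - r = δ := by rw [ht_def]; ring
    rw [h1, h2]
  have hV1 : CH ^ 2 * (δ ^ (2 * H) / (2 * H)) ≤ ∫ θ in Ioc r t, (K t θ) ^ 2 := by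
    calc CH ^ 2 * (δ ^ (2 * H) / (2 * H))
        = ∫ θ in Ioc r t, CH ^ 2 * (t - θ) ^ (2 * H - 1) := by
          rw [MeasureTheory.integral_const_mul, hval]
      _ ≤ _ := hVlow
  have hV2 : ∫ θ in Ioc r t, (K t θ) ^ 2
      ≤ CH ^ 2 * M ^ 2 * (δ ^ (2 * H) / (2 * H)) := by
    calc ∫ θ in Ioc r t, (K t θ) ^ 2
        ≤ ∫ θ in Ioc r t, CH ^ 2 * M ^ 2 * (t - θ) ^ (2 * H - 1) := hVup
      _ = CH ^ 2 * M ^ 2 * (δ ^ (2 * H) / (2 * H)) := by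
          rw [MeasureTheory.integral_const_mul, hval]
  have hn2H : 0 < (n : ℝ) ^ (2 * H) := Real.rpow_pos_of_pos hn0 _
  have hs2H : (n : ℝ) ^ (2 * H) * δ ^ (2 * H) = s ^ (2 * H) := by
    rw [hδ_def, Real.div_rpow hs hn0.le, mul_comm, div_mul_cancel₀ _ hn2H.ne']
  rw [intervalIntegral.integral_of_le hrt.le]
  constructor
  · calc CH ^ 2 * s ^ (2 * H) / (2 * H)
        = (n : ℝ) ^ (2 * H) * (CH ^ 2 * (δ ^ (2 * H) / (2 * H))) := by
          rw [← hs2H]; ring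
      _ ≤ (n : ℝ) ^ (2 * H) * ∫ θ in Ioc r t, (K t θ) ^ 2 :=
          mul_le_mul_of_nonneg_left hV1 hn2H.le
  · calc (n : ℝ) ^ (2 * H) * ∫ θ in Ioc r t, (K t θ) ^ 2
        ≤ (n : ℝ) ^ (2 * H) * (CH ^ 2 * M ^ 2 * (δ ^ (2 * H) / (2 * H))) :=
          mul_le_mul_of_nonneg_left hV2 hn2H.le
      _ = CH ^ 2 * s ^ (2 * H) / (2 * H) * M ^ 2 := by
          rw [← hs2H]; ring
end

section
/- Let $H \in (1/2,1)$, $\mathcal{C}_H > 0$, and let $K_H(t,s) := \mathcal{C}_H s^{1/2-H}\int_s^t (u-s)^{H-3/2} u^{H-1/2} du$ for $0 < s \le t$. Set $\beta_{H,1} := \mathcal{C}_H (H - 1/2)^{-1}$. Then there exists a constant $C > 0$ depending only on $H$ such that for all $r, s > 0$ and all integers $n \ge 1$: $| n^{H - 1/2} s^{1/2 - H} K_H(r + s/n, r) - \beta_{H,1} | \le C \frac{s}{rn}$. -/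
open MeasureTheory intervalIntegral Real Set

private lemma shift_integral (r δ q : ℝ) (hq : -1 < q) :
    ∫ u in r..(r + δ), (u - r) ^ q = δ ^ (q + 1) / (q + 1) := by
  have h1 : (∫ u in r..(r + δ), (u - r) ^ q)
      = ∫ u in (r - r)..(r + δ - r), u ^ q :=
    intervalIntegral.integral_comp_sub_right (fun u => u ^ q) r
  rw [h1]
  simp only [sub_self, add_sub_cancel_left]
  rw [integral_rpow (Or.inl hq), Real.zero_rpow (by linarith), sub_zero]

private lemma shift_integrable (r δ q : ℝ) (hq : -1 < q) :
    IntervalIntegrable (fun u => (u - r) ^ q) volume r (r + δ) := by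
  have := (intervalIntegrable_rpow' (a := 0) (b := δ) hq).comp_sub_right r
  simpa [add_comm] using this

/-- Rate of convergence of `n^{H-1/2} s^{1/2-H} K_H(r+s/n, r)` to `β_{H,1}`, `H > 1/2`. -/
theorem stmt11 (H CH : ℝ) (hH : 1 / 2 < H) (hH1 : H < 1) (hCH : 0 < CH)
    (K : ℝ → ℝ → ℝ)
    (hK : ∀ s t : ℝ, 0 < s → s ≤ t →
      K t s = CH * s ^ ((1 : ℝ) / 2 - H)
        * ∫ u in s..t, (u - s) ^ (H - 3 / 2) * u ^ (H - 1 / 2)) :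
    ∃ C : ℝ, 0 < C ∧ ∀ (r s : ℝ) (n : ℕ), 0 < r → 0 < s → 1 ≤ n →
      |(n : ℝ) ^ (H - 1 / 2) * s ^ ((1 : ℝ) / 2 - H) * K (r + s / (n : ℝ)) r
        - CH * (H - 1 / 2)⁻¹| ≤ C * (s / (r * (n : ℝ))) := by
  have hp0 : 0 < H - 1 / 2 := by linarith
  have hp1 : H - 1 / 2 ≤ 1 := by linarith
  have hq : (-1 : ℝ) < H - 3 / 2 := by linarith
  refine ⟨CH * (H - 1 / 2) / (H + 1 / 2), by positivity, ?_⟩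
  intro r s n hr hs hn
  have hn0 : (0 : ℝ) < n := by exact_mod_cast Nat.lt_of_lt_of_le Nat.zero_lt_one hn
  set δ := s / (n : ℝ) with hδ_def
  have hδ : 0 < δ := div_pos hs hn0
  have hKr := hK r (r + δ) hr (by linarith)
  -- integrability
  have hint_base := shift_integrable r δ (H - 3 / 2) hq
  have hint_base2 := shift_integrable r δ (H - 1 / 2) (by linarith)
  have hcont : ContinuousOn (fun u : ℝ => u ^ (H - 1 / 2)) (Set.uIcc r (r + δ)) := by
    apply ContinuousOn.rpow_const continuousOn_id
    intro x _; right; linarith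
  have hint_f : IntervalIntegrable
      (fun u => (u - r) ^ (H - 3 / 2) * u ^ (H - 1 / 2)) volume r (r + δ) :=
    hint_base.mul_continuousOn hcont
  have hint_g : IntervalIntegrable
      (fun u => (u - r) ^ (H - 3 / 2) * r ^ (H - 1 / 2)) volume r (r + δ) :=
    hint_base.mul_const _
  have hint_u : IntervalIntegrable
      (fun u => (u - r) ^ (H - 3 / 2) * r ^ (H - 1 / 2)
        + (H - 1 / 2) * r ^ (H - 3 / 2) * (u - r) ^ (H - 1 / 2)) volume r (r + δ) :=
    hint_g.add (hint_base2.const_mul _)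
  -- pointwise bounds
  have hlow : ∀ u ∈ Set.Icc r (r + δ),
      (u - r) ^ (H - 3 / 2) * r ^ (H - 1 / 2)
        ≤ (u - r) ^ (H - 3 / 2) * u ^ (H - 1 / 2) := by
    intro u hu
    exact mul_le_mul_of_nonneg_left
      (Real.rpow_le_rpow hr.le hu.1 hp0.le)
      (Real.rpow_nonneg (by linarith [hu.1]) _)
  have hup : ∀ u ∈ Set.Icc r (r + δ),
      (u - r) ^ (H - 3 / 2) * u ^ (H - 1 / 2)
        ≤ (u - r) ^ (H - 3 / 2) * r ^ (H - 1 / 2)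
          + (H - 1 / 2) * r ^ (H - 3 / 2) * (u - r) ^ (H - 1 / 2) := by
    intro u hu
    rcases eq_or_lt_of_le hu.1 with h | h
    · subst h
      have h1 : (0:ℝ) ≤ (r - r) ^ (H - 1 / 2) := Real.rpow_nonneg (by simp) _
      have h2 : (0:ℝ) ≤ r ^ (H - 3 / 2) := Real.rpow_nonneg hr.le _
      nlinarith [mul_nonneg (mul_nonneg hp0.le h2) h1]
    · have hur : 0 < u - r := by linarith
      -- Bernoulli: u ^ p ≤ r ^ p + p * r ^ (p - 1) * (u - r)
      have hber : u ^ (H - 1 / 2)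
          ≤ r ^ (H - 1 / 2) + (H - 1 / 2) * r ^ (H - 3 / 2) * (u - r) := by
        have ht : (-1 : ℝ) ≤ (u - r) / r :=
          le_trans (by norm_num) (by positivity : (0:ℝ) ≤ (u - r) / r)
        have h1 : (1 + (u - r) / r) ^ (H - 1 / 2)
            ≤ 1 + (H - 1 / 2) * ((u - r) / r) :=
          rpow_one_add_le_one_add_mul_self ht hp0.le hp1
        have h2 : u = r * (1 + (u - r) / r) := by field_simp; ring
        have h3 : u ^ (H - 1 / 2)
            = r ^ (H - 1 / 2) * (1 + (u - r) / r) ^ (H - 1 / 2) := by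
          nth_rewrite 1 [h2]
          exact Real.mul_rpow hr.le (by positivity)
        rw [h3]
        have h4 : r ^ (H - 1 / 2) * (1 + (u - r) / r) ^ (H - 1 / 2)
            ≤ r ^ (H - 1 / 2) * (1 + (H - 1 / 2) * ((u - r) / r)) :=
          mul_le_mul_of_nonneg_left h1 (Real.rpow_nonneg hr.le _)
        refine h4.trans (le_of_eq ?_)
        have h5 : r ^ (H - 1 / 2) = r ^ (H - 3 / 2) * r := by
          rw [← Real.rpow_add_one hr.ne' (H - 3 / 2),
            show H - 3 / 2 + 1 = H - 1 / 2 by ring]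
        rw [h5]; field_simp
      calc (u - r) ^ (H - 3 / 2) * u ^ (H - 1 / 2)
          ≤ (u - r) ^ (H - 3 / 2)
            * (r ^ (H - 1 / 2) + (H - 1 / 2) * r ^ (H - 3 / 2) * (u - r)) :=
            mul_le_mul_of_nonneg_left hber (Real.rpow_nonneg hur.le _)
        _ = (u - r) ^ (H - 3 / 2) * r ^ (H - 1 / 2)
            + (H - 1 / 2) * r ^ (H - 3 / 2) * ((u - r) ^ (H - 3 / 2) * (u - r)) := by
            ring
        _ = (u - r) ^ (H - 3 / 2) * r ^ (H - 1 / 2)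
            + (H - 1 / 2) * r ^ (H - 3 / 2) * (u - r) ^ (H - 1 / 2) := by
            rw [← Real.rpow_add_one hur.ne' (H - 3 / 2),
              show H - 3 / 2 + 1 = H - 1 / 2 by ring]
  -- integral bounds
  set I := ∫ u in r..(r + δ), (u - r) ^ (H - 3 / 2) * u ^ (H - 1 / 2) with hI_def
  have hIg : (∫ u in r..(r + δ), (u - r) ^ (H - 3 / 2) * r ^ (H - 1 / 2))
      = δ ^ (H - 1 / 2) / (H - 1 / 2) * r ^ (H - 1 / 2) := by
    rw [intervalIntegral.integral_mul_const, shift_integral r δ _ hq,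
      show H - 3 / 2 + 1 = H - 1 / 2 by ring]
  have hIh : (∫ u in r..(r + δ), (u - r) ^ (H - 1 / 2))
      = δ ^ (H + 1 / 2) / (H + 1 / 2) := by
    rw [shift_integral r δ _ (by linarith : (-1:ℝ) < H - 1 / 2),
      show H - 1 / 2 + 1 = H + 1 / 2 by ring]
  have hle : r ≤ r + δ := by linarith
  have hI_lower : δ ^ (H - 1 / 2) / (H - 1 / 2) * r ^ (H - 1 / 2) ≤ I := by
    rw [← hIg]
    exact intervalIntegral.integral_mono_on hle hint_g hint_f hlow
  have hI_upper : I ≤ δ ^ (H - 1 / 2) / (H - 1 / 2) * r ^ (H - 1 / 2)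
      + (H - 1 / 2) * r ^ (H - 3 / 2) * (δ ^ (H + 1 / 2) / (H + 1 / 2)) := by
    have := intervalIntegral.integral_mono_on hle hint_f hint_u hup
    rwa [intervalIntegral.integral_add hint_g (hint_base2.const_mul _), hIg,
      intervalIntegral.integral_const_mul, hIh] at this
  -- final arithmetic
  have hA : (n:ℝ) ^ (H - 1 / 2) * s ^ ((1:ℝ) / 2 - H) = δ ^ ((1:ℝ) / 2 - H) := by
    have h0 : ((n:ℝ) ^ ((1:ℝ) / 2 - H)) ≠ 0 := by positivity
    rw [hδ_def, Real.div_rpow hs.le hn0.le, eq_div_iff h0, mul_right_comm,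
      ← Real.rpow_add hn0, show H - 1 / 2 + ((1:ℝ) / 2 - H) = 0 by ring,
      Real.rpow_zero, one_mul]
  set c := δ ^ ((1:ℝ) / 2 - H) * (CH * r ^ ((1:ℝ) / 2 - H)) with hc_def
  have hcpos : 0 < c := by positivity
  have e1 : δ ^ ((1:ℝ) / 2 - H) * δ ^ (H - 1 / 2) = 1 := by
    rw [← Real.rpow_add hδ, show (1:ℝ) / 2 - H + (H - 1 / 2) = 0 by ring, Real.rpow_zero]
  have e2 : r ^ ((1:ℝ) / 2 - H) * r ^ (H - 1 / 2) = 1 := by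
    rw [← Real.rpow_add hr, show (1:ℝ) / 2 - H + (H - 1 / 2) = 0 by ring, Real.rpow_zero]
  have e3 : δ ^ ((1:ℝ) / 2 - H) * δ ^ (H + 1 / 2) = δ := by
    rw [← Real.rpow_add hδ, show (1:ℝ) / 2 - H + (H + 1 / 2) = 1 by ring, Real.rpow_one]
  have e4 : r ^ ((1:ℝ) / 2 - H) * r ^ (H - 3 / 2) = r⁻¹ := by
    rw [← Real.rpow_add hr, show (1:ℝ) / 2 - H + (H - 3 / 2) = -1 by ring, Real.rpow_neg_one]
  have hL : c * (δ ^ (H - 1 / 2) / (H - 1 / 2) * r ^ (H - 1 / 2)) = CH * (H - 1 / 2)⁻¹ := by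
    calc c * (δ ^ (H - 1 / 2) / (H - 1 / 2) * r ^ (H - 1 / 2))
        = CH * (H - 1 / 2)⁻¹
          * ((δ ^ ((1:ℝ) / 2 - H) * δ ^ (H - 1 / 2)) * (r ^ ((1:ℝ) / 2 - H) * r ^ (H - 1 / 2))) := by
          rw [hc_def]; ring
      _ = CH * (H - 1 / 2)⁻¹ := by rw [e1, e2, mul_one, mul_one]
  have hB : c * ((H - 1 / 2) * r ^ (H - 3 / 2) * (δ ^ (H + 1 / 2) / (H + 1 / 2)))
      = CH * (H - 1 / 2) / (H + 1 / 2) * (δ / r) := by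
    calc c * ((H - 1 / 2) * r ^ (H - 3 / 2) * (δ ^ (H + 1 / 2) / (H + 1 / 2)))
        = CH * (H - 1 / 2) / (H + 1 / 2)
          * ((δ ^ ((1:ℝ) / 2 - H) * δ ^ (H + 1 / 2)) * (r ^ ((1:ℝ) / 2 - H) * r ^ (H - 3 / 2))) := by
          rw [hc_def]; ring
      _ = CH * (H - 1 / 2) / (H + 1 / 2) * (δ / r) := by
          rw [e3, e4]; ring
  have h1 : c * (δ ^ (H - 1 / 2) / (H - 1 / 2) * r ^ (H - 1 / 2)) ≤ c * I :=
    mul_le_mul_of_nonneg_left hI_lower hcpos.le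
  have h2 : c * I ≤ c * (δ ^ (H - 1 / 2) / (H - 1 / 2) * r ^ (H - 1 / 2))
      + c * ((H - 1 / 2) * r ^ (H - 3 / 2) * (δ ^ (H + 1 / 2) / (H + 1 / 2))) := by
    have := mul_le_mul_of_nonneg_left hI_upper hcpos.le
    rwa [mul_add] at this
  have hnn : 0 ≤ CH * (H - 1 / 2) / (H + 1 / 2) * (δ / r) :=
    mul_nonneg (div_nonneg (mul_nonneg hCH.le hp0.le) (by linarith))
      (div_nonneg hδ.le hr.le)
  have key : |c * I - CH * (H - 1 / 2)⁻¹| ≤ CH * (H - 1 / 2) / (H + 1 / 2) * (δ / r) := by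
    rw [abs_le]
    constructor
    · linarith
    · linarith
  have hdr : δ / r = s / (r * (n:ℝ)) := by rw [hδ_def, div_div, mul_comm]
  rw [hKr]
  calc |(n:ℝ) ^ (H - 1 / 2) * s ^ ((1:ℝ) / 2 - H)
        * (CH * r ^ ((1:ℝ) / 2 - H) * I) - CH * (H - 1 / 2)⁻¹|
      = |c * I - CH * (H - 1 / 2)⁻¹| := by rw [hA, hc_def]; congr 1; ring
    _ ≤ CH * (H - 1 / 2) / (H + 1 / 2) * (δ / r) := key
    _ = CH * (H - 1 / 2) / (H + 1 / 2) * (s / (r * (n:ℝ))) := by rw [hdr]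
end

section
/- Fix $H \in (0,1)$ and constants as follows: $\beta_{H,1} > 0$, $\beta_{H,2} := (2H)^{-1}\beta_{H,1}^2$, and $\beta_{H,3}(s_1, s_2) := \mathcal{C}_H^2 |H-1/2|^{-2} \int_0^\infty ((\theta+s_1)^{H-1/2} - (\theta+s_2)^{H-1/2})^2 \, d\theta$. If $H > 1/3$ and $f, g : \mathbb{R} \to \mathbb{R}$ satisfy $\int_{\mathbb{R}} |f(x)|(1+|x|)dx < \infty$ and $\int_{\mathbb{R}} |g(x)|(1+|x|)dx < \infty$, then the integral $\int_{\mathbb{R}_+^2} \int_{\mathbb{R}} \int_{\mathbb{R}^2} \eta^2 |f(x) g(\tilde{x})| \, |e^{\mathbf{i}\eta x} - 1| \, |1 - e^{-\mathbf{i}\eta \tilde{x}}| (s_1 s_2)^{H-1/2} e^{-\frac{1}{2}(\beta_{H,2}(s_1^{2H}+s_2^{2H}) + \beta_{H,3}(s_1,s_2))\eta^2} \, dx \, d\tilde{x} \, d\eta \, ds_1 \, ds_2$ is finite. -/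
open MeasureTheory Real Set

lemma norm_exp_I_sub_one_le_two (t : ℝ) : ‖Complex.exp (t * Complex.I) - 1‖ ≤ 2 := by
  calc ‖Complex.exp (t * Complex.I) - 1‖ ≤ ‖Complex.exp (t * Complex.I)‖ + ‖(1:ℂ)‖ :=
        norm_sub_le _ _
    _ ≤ 2 := by
        rw [Complex.norm_exp]
        simp; norm_num

lemma norm_exp_I_sub_one_le_abs (t : ℝ) : ‖Complex.exp (t * Complex.I) - 1‖ ≤ 2 * |t| := by
  rcases le_or_gt |t| 1 with h | h
  · have := Complex.norm_exp_sub_one_le (x := t * Complex.I) (by simpa using h)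
    simpa [Complex.norm_exp] using this
  · calc ‖Complex.exp (t * Complex.I) - 1‖ ≤ 2 := norm_exp_I_sub_one_le_two t
      _ ≤ 2 * |t| := by nlinarith

lemma gauss_lint_le (q : ℕ) (hq : q ≤ 4) {a : ℝ} (ha : 0 < a) :
    ∫⁻ η : ℝ, ENNReal.ofReal (|η| ^ q * Real.exp (-a * η ^ 2))
      ≤ ENNReal.ofReal (17 * Real.sqrt (2 * Real.pi) * a ^ (-((q : ℝ) + 1) / 2)) := by
  have key : ∀ η : ℝ, |η| ^ q * Real.exp (-a * η ^ 2)
      ≤ 17 * a ^ (-(q : ℝ) / 2) * Real.exp (-(a / 2) * η ^ 2) := by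
    intro η
    set t := a * η ^ 2 with ht
    have ht0 : 0 ≤ t := by positivity
    have h1 : (|η| : ℝ) ^ q = a ^ (-(q : ℝ) / 2) * t ^ ((q : ℝ) / 2) := by
      have e1 : t ^ ((q : ℝ) / 2) = a ^ ((q : ℝ) / 2) * (η ^ 2) ^ ((q : ℝ) / 2) :=
        Real.mul_rpow ha.le (sq_nonneg η)
      have e2 : ((η : ℝ) ^ 2) ^ ((q : ℝ) / 2) = |η| ^ q := by
        rw [← sq_abs η, ← Real.rpow_two, ← Real.rpow_mul (abs_nonneg η)]
        rw [show (2 : ℝ) * ((q : ℝ) / 2) = (q : ℝ) by ring, Real.rpow_natCast]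
      rw [e1, e2, ← mul_assoc, ← Real.rpow_add ha]
      rw [show -(q:ℝ)/2 + (q:ℝ)/2 = 0 by ring, Real.rpow_zero, one_mul]
    have h2 : t ^ ((q : ℝ) / 2) ≤ 17 * Real.exp (t / 2) := by
      have hA : t ^ ((q : ℝ) / 2) ≤ 1 + t ^ 2 := by
        rcases le_or_gt t 1 with h | h
        · have h0 : t ^ ((q : ℝ) / 2) ≤ 1 := Real.rpow_le_one ht0 h (by positivity)
          nlinarith [sq_nonneg t]
        · have h0 : t ^ ((q : ℝ) / 2) ≤ t ^ (2 : ℝ) :=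
            Real.rpow_le_rpow_of_exponent_le h.le
              (by have : (q : ℝ) ≤ 4 := by exact_mod_cast hq
                  linarith)
          rw [Real.rpow_two] at h0; nlinarith
      have hB : t ^ 2 ≤ 16 * Real.exp (t / 2) := by
        have h4 : t / 4 + 1 ≤ Real.exp (t / 4) := Real.add_one_le_exp _
        have h5 : Real.exp (t / 2) = Real.exp (t / 4) * Real.exp (t / 4) := by
          rw [← Real.exp_add]; ring_nf
        nlinarith [Real.exp_pos (t / 4)]
      have hC : (1:ℝ) ≤ Real.exp (t / 2) := Real.one_le_exp (by positivity)
      nlinarith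
    have hsplit : Real.exp (-a * η ^ 2) = Real.exp (-(t / 2)) * Real.exp (-(a / 2) * η ^ 2) := by
      rw [← Real.exp_add]; congr 1; rw [ht]; ring
    calc |η| ^ q * Real.exp (-a * η ^ 2)
        = a ^ (-(q : ℝ) / 2) * (t ^ ((q : ℝ) / 2) * Real.exp (-(t / 2)))
            * Real.exp (-(a / 2) * η ^ 2) := by rw [h1, hsplit]; ring
      _ ≤ a ^ (-(q : ℝ) / 2) * 17 * Real.exp (-(a / 2) * η ^ 2) := by
          have h6 : t ^ ((q : ℝ) / 2) * Real.exp (-(t / 2)) ≤ 17 := by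
            rw [Real.exp_neg]
            rw [← div_eq_mul_inv, div_le_iff₀ (Real.exp_pos _)]
            linarith [h2]
          gcongr
      _ = 17 * a ^ (-(q : ℝ) / 2) * Real.exp (-(a / 2) * η ^ 2) := by ring
  have step1 : ∫⁻ η : ℝ, ENNReal.ofReal (|η| ^ q * Real.exp (-a * η ^ 2))
      ≤ ∫⁻ η : ℝ, ENNReal.ofReal (17 * a ^ (-(q : ℝ) / 2) * Real.exp (-(a / 2) * η ^ 2)) :=
    lintegral_mono fun η => ENNReal.ofReal_le_ofReal (key η)
  have step2 : ∫⁻ η : ℝ, ENNReal.ofReal (17 * a ^ (-(q : ℝ) / 2) * Real.exp (-(a / 2) * η ^ 2))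
      = ENNReal.ofReal (17 * a ^ (-(q : ℝ) / 2)) * ENNReal.ofReal (Real.sqrt (Real.pi / (a / 2))) := by
    have hpull : ∀ η : ℝ, ENNReal.ofReal (17 * a ^ (-(q : ℝ) / 2) * Real.exp (-(a / 2) * η ^ 2))
        = ENNReal.ofReal (17 * a ^ (-(q : ℝ) / 2)) * ENNReal.ofReal (Real.exp (-(a / 2) * η ^ 2)) := by
      intro η; rw [← ENNReal.ofReal_mul (by positivity)]
    simp_rw [hpull]
    rw [lintegral_const_mul' _ _ ENNReal.ofReal_ne_top]
    congr 1
    rw [← ofReal_integral_eq_lintegral_ofReal (integrable_exp_neg_mul_sq (by positivity))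
      (Filter.Eventually.of_forall fun x => Real.exp_nonneg _)]
    rw [integral_gaussian]
  calc _ ≤ ENNReal.ofReal (17 * a ^ (-(q : ℝ) / 2)) * ENNReal.ofReal (Real.sqrt (Real.pi / (a / 2))) :=
        step1.trans (le_of_eq step2)
    _ = ENNReal.ofReal (17 * Real.sqrt (2 * Real.pi) * a ^ (-((q : ℝ) + 1) / 2)) := by
        rw [← ENNReal.ofReal_mul (by positivity)]
        congr 1
        have e1 : Real.pi / (a / 2) = 2 * Real.pi / a := by ring
        rw [e1, Real.sqrt_div' (2 * Real.pi) ha.le]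
        rw [Real.sqrt_eq_rpow a, show (-((q:ℝ)+1)/2) = (-(q:ℝ)/2) + (-(1/2)) by ring,
          Real.rpow_add ha, Real.rpow_neg ha.le]
        ring

lemma lint_piece (c₁ c₂ e₁ e₂ : ℝ) (h₁ : -1 < e₁) (h₂ : e₂ < -1) :
    ∫⁻ s in Set.Ioi (0 : ℝ), ENNReal.ofReal (if s ≤ 1 then c₁ * s ^ e₁ else c₂ * s ^ e₂) < ⊤ := by
  rw [← Set.Ioc_union_Ioi_eq_Ioi (zero_le_one (α := ℝ)),
    lintegral_union measurableSet_Ioi (Set.Ioc_disjoint_Ioi le_rfl)]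
  have p1 : ∫⁻ s in Set.Ioc (0 : ℝ) 1, ENNReal.ofReal (if s ≤ 1 then c₁ * s ^ e₁ else c₂ * s ^ e₂)
      = ∫⁻ s in Set.Ioc (0 : ℝ) 1, ENNReal.ofReal (c₁ * s ^ e₁) := by
    refine setLIntegral_congr_fun measurableSet_Ioc (fun s hs => ?_)
    rw [if_pos hs.2]
  have p2 : ∫⁻ s in Set.Ioi (1 : ℝ), ENNReal.ofReal (if s ≤ 1 then c₁ * s ^ e₁ else c₂ * s ^ e₂)
      = ∫⁻ s in Set.Ioi (1 : ℝ), ENNReal.ofReal (c₂ * s ^ e₂) := by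
    refine setLIntegral_congr_fun measurableSet_Ioi (fun s hs => ?_)
    rw [if_neg (not_le.2 hs)]
  rw [p1, p2]
  have i1 : IntegrableOn (fun s : ℝ => c₁ * s ^ e₁) (Set.Ioc 0 1) := by
    have := intervalIntegral.intervalIntegrable_rpow' (a := 0) (b := 1) h₁
    rw [intervalIntegrable_iff, Set.uIoc_of_le zero_le_one] at this
    exact this.const_mul c₁
  have i2 : IntegrableOn (fun s : ℝ => c₂ * s ^ e₂) (Set.Ioi 1) :=
    (integrableOn_Ioi_rpow_of_lt h₂ one_pos).const_mul c₂
  exact ENNReal.add_lt_top.2 ⟨i1.setLIntegral_lt_top, i2.setLIntegral_lt_top⟩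

lemma meas_piece (c₁ c₂ e₁ e₂ : ℝ) :
    Measurable fun s : ℝ => if s ≤ 1 then c₁ * s ^ e₁ else c₂ * s ^ e₂ :=
  Measurable.ite (measurableSet_le measurable_id measurable_const) (by fun_prop) (by fun_prop)

lemma lint4 {μ : Measure ℝ} {A B C D : ℝ → ENNReal} (hA : Measurable A) (hB : Measurable B)
    (hC : Measurable C) :
    ∫⁻ s, (A s + B s + C s + D s) ∂μ
      = (∫⁻ s, A s ∂μ) + (∫⁻ s, B s ∂μ) + (∫⁻ s, C s ∂μ) + ∫⁻ s, D s ∂μ := by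
  rw [lintegral_add_left (f := fun s => A s + B s + C s) ((hA.add hB).add hC),
    lintegral_add_left (f := fun s => A s + B s) (hA.add hB),
    lintegral_add_left hA]

lemma Wb_aux (b c X : ℝ) (hb : 0 < b) (hc : 0 ≤ c) {P S : ℝ} (hP : 0 ≤ P)
    (hX1 : 0 < X) (hX : X ≤ S) :
    P * (b * S) ^ (-c) ≤ b ^ (-c) * (P * X ^ (-c)) := by
  have hS : 0 < S := lt_of_lt_of_le hX1 hX
  rw [Real.mul_rpow hb.le hS.le]
  have h := Real.rpow_le_rpow_of_nonpos hX1 hX (neg_nonpos.2 hc)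
  have hb' : 0 ≤ b ^ (-c) := Real.rpow_nonneg hb.le _
  nlinarith [mul_nonneg hb' hP]

lemma gm_aux (H : ℝ) {s₁ s₂ : ℝ} (h1 : 0 < s₁) (h2 : 0 < s₂) :
    (s₁ * s₂) ^ H ≤ s₁ ^ (2 * H) + s₂ ^ (2 * H) := by
  have e0 : (s₁ * s₂) ^ H = s₁ ^ H * s₂ ^ H := Real.mul_rpow h1.le h2.le
  have e1 : s₁ ^ (2 * H) = (s₁ ^ H) ^ 2 := by
    rw [show 2 * H = H * 2 by ring, Real.rpow_mul h1.le, Real.rpow_two]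
  have e2 : s₂ ^ (2 * H) = (s₂ ^ H) ^ 2 := by
    rw [show 2 * H = H * 2 by ring, Real.rpow_mul h2.le, Real.rpow_two]
  rw [e0, e1, e2]
  nlinarith [sq_nonneg (s₁ ^ H - s₂ ^ H)]

lemma diag_aux (H c : ℝ) {s₁ s₂ : ℝ} (h1 : 0 < s₁) (h2 : 0 < s₂) :
    (s₁ * s₂) ^ (H - 1/2) * ((s₁ * s₂) ^ H) ^ (-c)
      = s₁ ^ (H - 1/2 - H * c) * s₂ ^ (H - 1/2 - H * c) := by
  have hm : 0 < s₁ * s₂ := mul_pos h1 h2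
  rw [← Real.rpow_mul hm.le, ← Real.rpow_add hm,
    show H - 1/2 + H * (-c) = H - 1/2 - H * c by ring, Real.mul_rpow h1.le h2.le]

lemma offdiag_aux (H c : ℝ) {s₁ s₂ : ℝ} (h1 : 0 < s₁) (h2 : 0 < s₂) :
    (s₁ * s₂) ^ (H - 1/2) * (s₂ ^ (2 * H)) ^ (-c)
      = s₁ ^ (H - 1/2) * s₂ ^ (H - 1/2 - 2 * H * c) := by
  rw [← Real.rpow_mul h2.le, Real.mul_rpow h1.le h2.le, mul_assoc, ← Real.rpow_add h2,
    show H - 1/2 + 2 * H * (-c) = H - 1/2 - 2 * H * c by ring]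

lemma W_bound (H b : ℝ) (hb : 0 < b) {s₁ s₂ : ℝ} (h1 : 0 < s₁) (h2 : 0 < s₂) :
    (s₁ * s₂) ^ (H - 1/2) * (b * (s₁ ^ (2*H) + s₂ ^ (2*H)))
        ^ (-((((2 + (if s₁ ≤ 1 then (0:ℕ) else 1) + (if s₂ ≤ 1 then (0:ℕ) else 1) : ℕ)) : ℝ) + 1) / 2)
      ≤ (if s₁ ≤ 1 then (b ^ (-(3:ℝ)/2)) * s₁ ^ (-(1+H)/2) else 0 * s₁ ^ (-(2:ℝ)))
          * (if s₂ ≤ 1 then 1 * s₂ ^ (-(1+H)/2) else 0 * s₂ ^ (-(2:ℝ)))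
        + (if s₁ ≤ 1 then (b ^ (-(2:ℝ))) * s₁ ^ (H - 1/2) else 0 * s₁ ^ (-(2:ℝ)))
          * (if s₂ ≤ 1 then 0 * s₂ ^ (0:ℝ) else 1 * s₂ ^ (-(1/2) - 3*H))
        + (if s₁ ≤ 1 then 0 * s₁ ^ (0:ℝ) else (b ^ (-(2:ℝ))) * s₁ ^ (-(1/2) - 3*H))
          * (if s₂ ≤ 1 then 1 * s₂ ^ (H - 1/2) else 0 * s₂ ^ (-(2:ℝ)))
        + (if s₁ ≤ 1 then 0 * s₁ ^ (0:ℝ) else (b ^ (-(5:ℝ)/2)) * s₁ ^ (-(1/2) - 3*H/2))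
          * (if s₂ ≤ 1 then 0 * s₂ ^ (0:ℝ) else 1 * s₂ ^ (-(1/2) - 3*H/2)) := by
  have hS1 : (0:ℝ) < s₁ ^ (2*H) := Real.rpow_pos_of_pos h1 _
  have hS2 : (0:ℝ) < s₂ ^ (2*H) := Real.rpow_pos_of_pos h2 _
  have hP : (0:ℝ) ≤ (s₁ * s₂) ^ (H - 1/2) := Real.rpow_nonneg (by positivity) _
  have hgm : (s₁ * s₂) ^ H ≤ s₁ ^ (2*H) + s₂ ^ (2*H) := gm_aux H h1 h2
  have hgmpos : (0:ℝ) < (s₁ * s₂) ^ H := Real.rpow_pos_of_pos (mul_pos h1 h2) _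
  by_cases hs1 : s₁ ≤ 1 <;> by_cases hs2 : s₂ ≤ 1 <;>
    simp only [hs1, hs2, if_true, if_false, mul_zero, zero_mul, add_zero, zero_add, one_mul]
  · have hc : (-((((2 + 0 + 0 : ℕ)) : ℝ) + 1) / 2) = -(3/2 : ℝ) := by norm_num
    calc (s₁ * s₂) ^ (H - 1/2) * (b * (s₁ ^ (2*H) + s₂ ^ (2*H))) ^ (-((((2 + 0 + 0 : ℕ)) : ℝ) + 1) / 2)
        ≤ b ^ (-(3/2:ℝ)) * ((s₁ * s₂) ^ (H - 1/2) * ((s₁ * s₂) ^ H) ^ (-(3/2:ℝ))) := by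
          rw [hc]; exact Wb_aux b (3/2) _ hb (by norm_num) hP hgmpos hgm
      _ = b ^ (-(3:ℝ)/2) * s₁ ^ (-(1+H)/2) * s₂ ^ (-(1+H)/2) := by
          rw [diag_aux H (3/2) h1 h2]
          rw [show H - 1/2 - H * (3/2) = -(1+H)/2 by ring, show -(3/2:ℝ) = -(3:ℝ)/2 by norm_num]
          ring
  · have hc : (-((((2 + 0 + 1 : ℕ)) : ℝ) + 1) / 2) = -(2 : ℝ) := by norm_num
    calc (s₁ * s₂) ^ (H - 1/2) * (b * (s₁ ^ (2*H) + s₂ ^ (2*H))) ^ (-((((2 + 0 + 1 : ℕ)) : ℝ) + 1) / 2)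
        ≤ b ^ (-(2:ℝ)) * ((s₁ * s₂) ^ (H - 1/2) * (s₂ ^ (2*H)) ^ (-(2:ℝ))) := by
          rw [hc]; exact Wb_aux b 2 _ hb (by norm_num) hP hS2 (le_add_of_nonneg_left hS1.le)
      _ = b ^ (-(2:ℝ)) * s₁ ^ (H - 1/2) * s₂ ^ (-(1/2) - 3*H) := by
          rw [offdiag_aux H 2 h1 h2, show H - 1/2 - 2 * H * 2 = -(1/2) - 3*H by ring]; ring
  · have hc : (-((((2 + 1 + 0 : ℕ)) : ℝ) + 1) / 2) = -(2 : ℝ) := by norm_num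
    have comm : (s₁ * s₂) ^ (H - 1/2) = (s₂ * s₁) ^ (H - 1/2) := by rw [mul_comm]
    calc (s₁ * s₂) ^ (H - 1/2) * (b * (s₁ ^ (2*H) + s₂ ^ (2*H))) ^ (-((((2 + 1 + 0 : ℕ)) : ℝ) + 1) / 2)
        ≤ b ^ (-(2:ℝ)) * ((s₂ * s₁) ^ (H - 1/2) * (s₁ ^ (2*H)) ^ (-(2:ℝ))) := by
          rw [hc, comm]
          exact Wb_aux b 2 _ hb (by norm_num) (comm ▸ hP) hS1 (le_add_of_nonneg_right hS2.le)
      _ = b ^ (-(2:ℝ)) * s₁ ^ (-(1/2) - 3*H) * s₂ ^ (H - 1/2) := by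
          rw [offdiag_aux H 2 h2 h1, show H - 1/2 - 2 * H * 2 = -(1/2) - 3*H by ring]; ring
  · have hc : (-((((2 + 1 + 1 : ℕ)) : ℝ) + 1) / 2) = -(5/2 : ℝ) := by norm_num
    calc (s₁ * s₂) ^ (H - 1/2) * (b * (s₁ ^ (2*H) + s₂ ^ (2*H))) ^ (-((((2 + 1 + 1 : ℕ)) : ℝ) + 1) / 2)
        ≤ b ^ (-(5/2:ℝ)) * ((s₁ * s₂) ^ (H - 1/2) * ((s₁ * s₂) ^ H) ^ (-(5/2:ℝ))) := by
          rw [hc]; exact Wb_aux b (5/2) _ hb (by norm_num) hP hgmpos hgm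
      _ = b ^ (-(5:ℝ)/2) * s₁ ^ (-(1/2) - 3*H/2) * s₂ ^ (-(1/2) - 3*H/2) := by
          rw [diag_aux H (5/2) h1 h2]
          rw [show H - 1/2 - H * (5/2) = -(1/2) - 3*H/2 by ring, show -(5/2:ℝ) = -(5:ℝ)/2 by norm_num]
          ring


lemma triple_bound (H β2 : ℝ) (hβ2 : 0 < β2) (β3 : ℝ) (hβ3 : 0 ≤ β3)
    (f g : ℝ → ℝ)
    (hLf : (∫⁻ x : ℝ, ENNReal.ofReal (|f x| * (1 + |x|))) ≠ ⊤)
    (hLg : (∫⁻ x : ℝ, ENNReal.ofReal (|g x| * (1 + |x|))) ≠ ⊤)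
    {s₁ s₂ : ℝ} (h1 : 0 < s₁) (h2 : 0 < s₂) :
    (∫⁻ η : ℝ, ∫⁻ x : ℝ, ∫⁻ x' : ℝ,
      ENNReal.ofReal (η ^ 2 * |f x * g x'|
        * ‖Complex.exp (Complex.I * η * x) - 1‖
        * ‖1 - Complex.exp (-(Complex.I * η * x'))‖
        * (s₁ * s₂) ^ (H - 1 / 2)
        * Real.exp (-(1 / 2) * (β2 * (s₁ ^ (2 * H) + s₂ ^ (2 * H)) + β3) * η ^ 2)))
      ≤ ENNReal.ofReal (4 * (17 * Real.sqrt (2 * Real.pi)))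
          * (∫⁻ x : ℝ, ENNReal.ofReal (|f x| * (1 + |x|)))
          * (∫⁻ x : ℝ, ENNReal.ofReal (|g x| * (1 + |x|)))
          * ENNReal.ofReal ((s₁ * s₂) ^ (H - 1 / 2)
              * (β2 / 2 * (s₁ ^ (2 * H) + s₂ ^ (2 * H)))
                ^ (-((((2 + (if s₁ ≤ 1 then (0:ℕ) else 1) + (if s₂ ≤ 1 then (0:ℕ) else 1) : ℕ)) : ℝ) + 1) / 2)) := by
  set n1 : ℕ := if s₁ ≤ 1 then (0:ℕ) else 1 with hn1
  set n2 : ℕ := if s₂ ≤ 1 then (0:ℕ) else 1 with hn2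
  set q : ℕ := 2 + n1 + n2 with hq
  have hq4 : q ≤ 4 := by rw [hq, hn1, hn2]; split_ifs <;> norm_num
  set Sg : ℝ := s₁ ^ (2 * H) + s₂ ^ (2 * H) with hSgdef
  have hSg : 0 < Sg := by
    rw [hSgdef]
    have := Real.rpow_pos_of_pos h1 (2*H); have := Real.rpow_pos_of_pos h2 (2*H); linarith
  set a : ℝ := β2 / 2 * Sg with hadef
  have ha : 0 < a := by rw [hadef]; positivity
  set P : ℝ := (s₁ * s₂) ^ (H - 1 / 2) with hPdef
  have hP : 0 ≤ P := Real.rpow_nonneg (by positivity) _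
  set Lf := ∫⁻ x : ℝ, ENNReal.ofReal (|f x| * (1 + |x|)) with hLfdef
  set Lg := ∫⁻ x : ℝ, ENNReal.ofReal (|g x| * (1 + |x|)) with hLgdef
  have hcn : ∀ η : ℝ, 0 ≤ 4 * |η| ^ q * P * Real.exp (-a * η ^ 2) := fun η =>
    mul_nonneg (mul_nonneg (mul_nonneg (by norm_num) (pow_nonneg (abs_nonneg _) _)) hP)
      (Real.exp_nonneg _)
  -- pointwise bound
  have hpt : ∀ η x x' : ℝ,
      η ^ 2 * |f x * g x'|
        * ‖Complex.exp (Complex.I * η * x) - 1‖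
        * ‖1 - Complex.exp (-(Complex.I * η * x'))‖
        * P * Real.exp (-(1 / 2) * (β2 * Sg + β3) * η ^ 2)
      ≤ ((4 * |η| ^ q * P * Real.exp (-a * η ^ 2)) * (|f x| * (1 + |x|)))
          * (|g x'| * (1 + |x'|)) := by
    intro η x x'
    have hexp : Real.exp (-(1 / 2) * (β2 * Sg + β3) * η ^ 2) ≤ Real.exp (-a * η ^ 2) := by
      apply Real.exp_le_exp.2
      have h := mul_nonneg hβ3 (sq_nonneg η)
      rw [hadef]; nlinarith
    have hN1 : ‖Complex.exp (Complex.I * η * x) - 1‖ ≤ 2 * |η| ^ n1 * (1 + |x|) := by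
      have e1 : Complex.I * (η:ℂ) * (x:ℂ) = ((η * x : ℝ) : ℂ) * Complex.I := by push_cast; ring
      rw [e1, hn1]
      split_ifs
      · have h := norm_exp_I_sub_one_le_two (η * x)
        have h2 := abs_nonneg x
        simp only [pow_zero, mul_one]
        linarith
      · have h := norm_exp_I_sub_one_le_abs (η * x)
        rw [abs_mul] at h
        have h2 := abs_nonneg x; have h3 := abs_nonneg η
        simp only [pow_one]
        nlinarith
    have hN2 : ‖1 - Complex.exp (-(Complex.I * η * x'))‖ ≤ 2 * |η| ^ n2 * (1 + |x'|) := by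
      rw [norm_sub_rev]
      have e1 : -(Complex.I * (η:ℂ) * (x':ℂ)) = (((-(η * x')) : ℝ) : ℂ) * Complex.I := by
        push_cast; ring
      rw [e1, hn2]
      split_ifs
      · have h := norm_exp_I_sub_one_le_two (-(η * x'))
        have h2 := abs_nonneg x'
        simp only [pow_zero, mul_one]
        linarith
      · have h := norm_exp_I_sub_one_le_abs (-(η * x'))
        rw [abs_neg, abs_mul] at h
        have h2 := abs_nonneg x'; have h3 := abs_nonneg η
        simp only [pow_one]
        nlinarith
    calc η ^ 2 * |f x * g x'|
        * ‖Complex.exp (Complex.I * η * x) - 1‖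
        * ‖1 - Complex.exp (-(Complex.I * η * x'))‖
        * P * Real.exp (-(1 / 2) * (β2 * Sg + β3) * η ^ 2)
        ≤ η ^ 2 * |f x * g x'| * (2 * |η| ^ n1 * (1 + |x|)) * (2 * |η| ^ n2 * (1 + |x'|))
            * P * Real.exp (-a * η ^ 2) := by
          gcongr <;> positivity
      _ = ((4 * |η| ^ q * P * Real.exp (-a * η ^ 2)) * (|f x| * (1 + |x|)))
            * (|g x'| * (1 + |x'|)) := by
          rw [abs_mul, hq, ← sq_abs η]; ring
  calc (∫⁻ η : ℝ, ∫⁻ x : ℝ, ∫⁻ x' : ℝ,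
      ENNReal.ofReal (η ^ 2 * |f x * g x'|
        * ‖Complex.exp (Complex.I * η * x) - 1‖
        * ‖1 - Complex.exp (-(Complex.I * η * x'))‖
        * P * Real.exp (-(1 / 2) * (β2 * Sg + β3) * η ^ 2)))
      ≤ ∫⁻ η : ℝ, ∫⁻ x : ℝ, ∫⁻ x' : ℝ,
          ENNReal.ofReal (((4 * |η| ^ q * P * Real.exp (-a * η ^ 2)) * (|f x| * (1 + |x|)))
            * (|g x'| * (1 + |x'|))) :=
        lintegral_mono fun η => lintegral_mono fun x => lintegral_mono fun x' =>
          ENNReal.ofReal_le_ofReal (hpt η x x')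
    _ = ∫⁻ η : ℝ, ∫⁻ x : ℝ,
          ENNReal.ofReal ((4 * |η| ^ q * P * Real.exp (-a * η ^ 2)) * (|f x| * (1 + |x|))) * Lg := by
        refine lintegral_congr fun η => lintegral_congr fun x => ?_
        have hsplit : ∀ x' : ℝ,
            ENNReal.ofReal (((4 * |η| ^ q * P * Real.exp (-a * η ^ 2)) * (|f x| * (1 + |x|)))
              * (|g x'| * (1 + |x'|)))
            = ENNReal.ofReal ((4 * |η| ^ q * P * Real.exp (-a * η ^ 2)) * (|f x| * (1 + |x|)))
                * ENNReal.ofReal (|g x'| * (1 + |x'|)) := fun x' =>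
          ENNReal.ofReal_mul (mul_nonneg (hcn η) (mul_nonneg (abs_nonneg _) (by positivity)))
        simp_rw [hsplit]
        rw [lintegral_const_mul' _ _ ENNReal.ofReal_ne_top]
    _ = ∫⁻ η : ℝ, (ENNReal.ofReal (4 * |η| ^ q * P * Real.exp (-a * η ^ 2)) * Lf) * Lg := by
        refine lintegral_congr fun η => ?_
        rw [lintegral_mul_const' _ _ hLg]
        congr 1
        have hsplit : ∀ x : ℝ,
            ENNReal.ofReal ((4 * |η| ^ q * P * Real.exp (-a * η ^ 2)) * (|f x| * (1 + |x|)))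
            = ENNReal.ofReal (4 * |η| ^ q * P * Real.exp (-a * η ^ 2))
                * ENNReal.ofReal (|f x| * (1 + |x|)) := fun x =>
          ENNReal.ofReal_mul (hcn η)
        simp_rw [hsplit]
        rw [lintegral_const_mul' _ _ ENNReal.ofReal_ne_top]
    _ = (∫⁻ η : ℝ, ENNReal.ofReal (4 * |η| ^ q * P * Real.exp (-a * η ^ 2))) * Lf * Lg := by
        rw [lintegral_mul_const' _ _ hLg, lintegral_mul_const' _ _ hLf]
    _ ≤ (ENNReal.ofReal (4 * P)
          * ENNReal.ofReal (17 * Real.sqrt (2 * Real.pi) * a ^ (-((q : ℝ) + 1) / 2))) * Lf * Lg := by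
        gcongr
        have hsplit : ∀ η : ℝ,
            ENNReal.ofReal (4 * |η| ^ q * P * Real.exp (-a * η ^ 2))
            = ENNReal.ofReal (4 * P) * ENNReal.ofReal (|η| ^ q * Real.exp (-a * η ^ 2)) := by
          intro η
          rw [← ENNReal.ofReal_mul (by positivity)]
          congr 1; ring
        simp_rw [hsplit]
        rw [lintegral_const_mul' _ _ ENNReal.ofReal_ne_top]
        exact mul_le_mul_right (gauss_lint_le q hq4 ha) _
    _ = ENNReal.ofReal (4 * (17 * Real.sqrt (2 * Real.pi))) * Lf * Lg
          * ENNReal.ofReal (P * a ^ (-((q : ℝ) + 1) / 2)) := by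
        rw [← ENNReal.ofReal_mul (by positivity),
          show 4 * P * (17 * Real.sqrt (2 * Real.pi) * a ^ (-((q : ℝ) + 1) / 2))
            = (4 * (17 * Real.sqrt (2 * Real.pi))) * (P * a ^ (-((q : ℝ) + 1) / 2)) by ring,
          ENNReal.ofReal_mul (by positivity)]
        ring


lemma T_fin (H b : ℝ) (hb : 0 < b) (hH : 1/3 < H) (hH1 : H < 1) :
    (∫⁻ s₁ in Set.Ioi (0:ℝ), ∫⁻ s₂ in Set.Ioi (0:ℝ),
      ENNReal.ofReal ((s₁ * s₂) ^ (H - 1/2) * (b * (s₁ ^ (2*H) + s₂ ^ (2*H)))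
        ^ (-((((2 + (if s₁ ≤ 1 then (0:ℕ) else 1) + (if s₂ ≤ 1 then (0:ℕ) else 1) : ℕ)) : ℝ) + 1) / 2)))
      < ⊤ := by
  have hH0 : (0:ℝ) < H := by linarith
  -- the eight piece functions
  set u1 : ℝ → ℝ := fun s => if s ≤ 1 then (b ^ (-(3:ℝ)/2)) * s ^ (-(1+H)/2) else 0 * s ^ (-(2:ℝ)) with hu1
  set v1 : ℝ → ℝ := fun s => if s ≤ 1 then 1 * s ^ (-(1+H)/2) else 0 * s ^ (-(2:ℝ)) with hv1
  set u2 : ℝ → ℝ := fun s => if s ≤ 1 then (b ^ (-(2:ℝ))) * s ^ (H - 1/2) else 0 * s ^ (-(2:ℝ)) with hu2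
  set v2 : ℝ → ℝ := fun s => if s ≤ 1 then 0 * s ^ (0:ℝ) else 1 * s ^ (-(1/2) - 3*H) with hv2
  set u3 : ℝ → ℝ := fun s => if s ≤ 1 then 0 * s ^ (0:ℝ) else (b ^ (-(2:ℝ))) * s ^ (-(1/2) - 3*H) with hu3
  set v3 : ℝ → ℝ := fun s => if s ≤ 1 then 1 * s ^ (H - 1/2) else 0 * s ^ (-(2:ℝ)) with hv3
  set u4 : ℝ → ℝ := fun s => if s ≤ 1 then 0 * s ^ (0:ℝ) else (b ^ (-(5:ℝ)/2)) * s ^ (-(1/2) - 3*H/2) with hu4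
  set v4 : ℝ → ℝ := fun s => if s ≤ 1 then 0 * s ^ (0:ℝ) else 1 * s ^ (-(1/2) - 3*H/2) with hv4
  have hunn : ∀ (c₁ c₂ e₁ e₂ : ℝ), 0 ≤ c₁ → 0 ≤ c₂ → ∀ s : ℝ, 0 < s →
      0 ≤ (if s ≤ 1 then c₁ * s ^ e₁ else c₂ * s ^ e₂) := by
    intro c₁ c₂ e₁ e₂ hc₁ hc₂ s hs
    split_ifs <;> exact mul_nonneg (by assumption) (Real.rpow_nonneg hs.le _)
  have hbnn : ∀ e : ℝ, 0 ≤ b ^ e := fun e => Real.rpow_nonneg hb.le e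
  -- finiteness of the eight pieces
  have hU1 := lint_piece (b ^ (-(3:ℝ)/2)) 0 (-(1+H)/2) (-(2:ℝ)) (by linarith) (by norm_num)
  have hV1 := lint_piece 1 0 (-(1+H)/2) (-(2:ℝ)) (by linarith) (by norm_num)
  have hU2 := lint_piece (b ^ (-(2:ℝ))) 0 (H - 1/2) (-(2:ℝ)) (by linarith) (by norm_num)
  have hV2 := lint_piece 0 1 (0:ℝ) (-(1/2) - 3*H) (by norm_num) (by linarith)
  have hU3 := lint_piece 0 (b ^ (-(2:ℝ))) (0:ℝ) (-(1/2) - 3*H) (by norm_num) (by linarith)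
  have hV3 := lint_piece 1 0 (H - 1/2) (-(2:ℝ)) (by linarith) (by norm_num)
  have hU4 := lint_piece 0 (b ^ (-(5:ℝ)/2)) (0:ℝ) (-(1/2) - 3*H/2) (by norm_num) (by linarith)
  have hV4 := lint_piece 0 1 (0:ℝ) (-(1/2) - 3*H/2) (by norm_num) (by linarith)
  set V1 := ∫⁻ s in Set.Ioi (0:ℝ), ENNReal.ofReal (v1 s) with hV1d
  set V2 := ∫⁻ s in Set.Ioi (0:ℝ), ENNReal.ofReal (v2 s) with hV2d
  set V3 := ∫⁻ s in Set.Ioi (0:ℝ), ENNReal.ofReal (v3 s) with hV3d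
  set V4 := ∫⁻ s in Set.Ioi (0:ℝ), ENNReal.ofReal (v4 s) with hV4d
  have step1 : ∀ s₁ ∈ Set.Ioi (0:ℝ),
      (∫⁻ s₂ in Set.Ioi (0:ℝ),
        ENNReal.ofReal ((s₁ * s₂) ^ (H - 1/2) * (b * (s₁ ^ (2*H) + s₂ ^ (2*H)))
          ^ (-((((2 + (if s₁ ≤ 1 then (0:ℕ) else 1) + (if s₂ ≤ 1 then (0:ℕ) else 1) : ℕ)) : ℝ) + 1) / 2)))
      ≤ ENNReal.ofReal (u1 s₁) * V1 + ENNReal.ofReal (u2 s₁) * V2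
        + ENNReal.ofReal (u3 s₁) * V3 + ENNReal.ofReal (u4 s₁) * V4 := by
    intro s₁ hs₁
    have h1 : (0:ℝ) < s₁ := hs₁
    calc (∫⁻ s₂ in Set.Ioi (0:ℝ),
        ENNReal.ofReal ((s₁ * s₂) ^ (H - 1/2) * (b * (s₁ ^ (2*H) + s₂ ^ (2*H)))
          ^ (-((((2 + (if s₁ ≤ 1 then (0:ℕ) else 1) + (if s₂ ≤ 1 then (0:ℕ) else 1) : ℕ)) : ℝ) + 1) / 2)))
        ≤ ∫⁻ s₂ in Set.Ioi (0:ℝ),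
            (ENNReal.ofReal (u1 s₁ * v1 s₂) + ENNReal.ofReal (u2 s₁ * v2 s₂)
              + ENNReal.ofReal (u3 s₁ * v3 s₂) + ENNReal.ofReal (u4 s₁ * v4 s₂)) := by
          refine setLIntegral_mono' measurableSet_Ioi fun s₂ hs₂ => ?_
          have h2 : (0:ℝ) < s₂ := hs₂
          have hW := W_bound H b hb h1 h2
          refine le_trans (ENNReal.ofReal_le_ofReal hW) ?_
          refine le_trans ENNReal.ofReal_add_le ?_
          refine add_le_add (le_trans ENNReal.ofReal_add_le
            (add_le_add (le_trans ENNReal.ofReal_add_le (add_le_add le_rfl le_rfl)) le_rfl)) le_rfl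
      _ = ENNReal.ofReal (u1 s₁) * V1 + ENNReal.ofReal (u2 s₁) * V2
            + ENNReal.ofReal (u3 s₁) * V3 + ENNReal.ofReal (u4 s₁) * V4 := by
          rw [lint4 ?mA ?mB ?mC]
          case mA => exact (((meas_piece _ _ _ _).const_mul (u1 s₁)).ennreal_ofReal)
          case mB => exact (((meas_piece _ _ _ _).const_mul (u2 s₁)).ennreal_ofReal)
          case mC => exact (((meas_piece _ _ _ _).const_mul (u3 s₁)).ennreal_ofReal)
          congr 1
          · congr 1
            · congr 1
              · have : ∀ s₂ : ℝ, ENNReal.ofReal (u1 s₁ * v1 s₂)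
                    = ENNReal.ofReal (u1 s₁) * ENNReal.ofReal (v1 s₂) := fun s₂ =>
                  ENNReal.ofReal_mul (hunn _ _ _ _ (hbnn _) (by norm_num) s₁ h1)
                simp_rw [this]
                rw [lintegral_const_mul' _ _ ENNReal.ofReal_ne_top]
              · have : ∀ s₂ : ℝ, ENNReal.ofReal (u2 s₁ * v2 s₂)
                    = ENNReal.ofReal (u2 s₁) * ENNReal.ofReal (v2 s₂) := fun s₂ =>
                  ENNReal.ofReal_mul (hunn _ _ _ _ (hbnn _) (by norm_num) s₁ h1)
                simp_rw [this]
                rw [lintegral_const_mul' _ _ ENNReal.ofReal_ne_top]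
            · have : ∀ s₂ : ℝ, ENNReal.ofReal (u3 s₁ * v3 s₂)
                  = ENNReal.ofReal (u3 s₁) * ENNReal.ofReal (v3 s₂) := fun s₂ =>
                ENNReal.ofReal_mul (hunn _ _ _ _ (by norm_num) (hbnn _) s₁ h1)
              simp_rw [this]
              rw [lintegral_const_mul' _ _ ENNReal.ofReal_ne_top]
          · have : ∀ s₂ : ℝ, ENNReal.ofReal (u4 s₁ * v4 s₂)
                = ENNReal.ofReal (u4 s₁) * ENNReal.ofReal (v4 s₂) := fun s₂ =>
              ENNReal.ofReal_mul (hunn _ _ _ _ (by norm_num) (hbnn _) s₁ h1)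
            simp_rw [this]
            rw [lintegral_const_mul' _ _ ENNReal.ofReal_ne_top]
  calc (∫⁻ s₁ in Set.Ioi (0:ℝ), ∫⁻ s₂ in Set.Ioi (0:ℝ),
      ENNReal.ofReal ((s₁ * s₂) ^ (H - 1/2) * (b * (s₁ ^ (2*H) + s₂ ^ (2*H)))
        ^ (-((((2 + (if s₁ ≤ 1 then (0:ℕ) else 1) + (if s₂ ≤ 1 then (0:ℕ) else 1) : ℕ)) : ℝ) + 1) / 2)))
      ≤ ∫⁻ s₁ in Set.Ioi (0:ℝ),
          (ENNReal.ofReal (u1 s₁) * V1 + ENNReal.ofReal (u2 s₁) * V2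
            + ENNReal.ofReal (u3 s₁) * V3 + ENNReal.ofReal (u4 s₁) * V4) :=
        setLIntegral_mono' measurableSet_Ioi step1
    _ = (∫⁻ s₁ in Set.Ioi (0:ℝ), ENNReal.ofReal (u1 s₁)) * V1
        + (∫⁻ s₁ in Set.Ioi (0:ℝ), ENNReal.ofReal (u2 s₁)) * V2
        + (∫⁻ s₁ in Set.Ioi (0:ℝ), ENNReal.ofReal (u3 s₁)) * V3
        + (∫⁻ s₁ in Set.Ioi (0:ℝ), ENNReal.ofReal (u4 s₁)) * V4 := by
        rw [lint4 ((meas_piece _ _ _ _).ennreal_ofReal.mul_const V1)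
          ((meas_piece _ _ _ _).ennreal_ofReal.mul_const V2)
          ((meas_piece _ _ _ _).ennreal_ofReal.mul_const V3)]
        rw [lintegral_mul_const' _ _ hV1.ne, lintegral_mul_const' _ _ hV2.ne,
          lintegral_mul_const' _ _ hV3.ne, lintegral_mul_const' _ _ hV4.ne]
    _ < ⊤ := by
        have t1 := ENNReal.mul_lt_top hU1 hV1
        have t2 := ENNReal.mul_lt_top hU2 hV2
        have t3 := ENNReal.mul_lt_top hU3 hV3
        have t4 := ENNReal.mul_lt_top hU4 hV4
        exact ENNReal.add_lt_top.2 ⟨ENNReal.add_lt_top.2 ⟨ENNReal.add_lt_top.2 ⟨t1, t2⟩, t3⟩, t4⟩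


/-- Absolute convergence of the integral defining `𝒜_H[f,g]` when `H > 1/3`
and `f, g ∈ Ξ₁`. -/
theorem stmt12 (H CH β1 : ℝ) (hH : 1 / 3 < H) (hH1 : H < 1)
    (hCH : 0 < CH) (hβ1 : 0 < β1)
    (β2 : ℝ) (hβ2 : β2 = (2 * H)⁻¹ * β1 ^ 2)
    (f g : ℝ → ℝ)
    (hf : Integrable (fun x => |f x| * (1 + |x|)))
    (hg : Integrable (fun x => |g x| * (1 + |x|))) :
    (∫⁻ s₁ in Set.Ioi (0 : ℝ), ∫⁻ s₂ in Set.Ioi (0 : ℝ), ∫⁻ η : ℝ, ∫⁻ x : ℝ, ∫⁻ x' : ℝ,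
      ENNReal.ofReal (η ^ 2 * |f x * g x'|
        * ‖Complex.exp (Complex.I * η * x) - 1‖
        * ‖1 - Complex.exp (-(Complex.I * η * x'))‖
        * (s₁ * s₂) ^ (H - 1 / 2)
        * Real.exp (-(1 / 2) * (β2 * (s₁ ^ (2 * H) + s₂ ^ (2 * H))
            + CH ^ 2 * (|H - 1 / 2|⁻¹) ^ 2
              * ∫ θ in Set.Ioi (0 : ℝ),
                  ((θ + s₁) ^ (H - 1 / 2) - (θ + s₂) ^ (H - 1 / 2)) ^ 2) * η ^ 2)))
    < ⊤ := by
  have hH0 : (0:ℝ) < H := by linarith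
  have hβ2pos : 0 < β2 := by rw [hβ2]; positivity
  have hb : 0 < β2 / 2 := by linarith
  have hLf : (∫⁻ x : ℝ, ENNReal.ofReal (|f x| * (1 + |x|))) ≠ ⊤ := hf.lintegral_lt_top.ne
  have hLg : (∫⁻ x : ℝ, ENNReal.ofReal (|g x| * (1 + |x|))) ≠ ⊤ := hg.lintegral_lt_top.ne
  set K0 := ENNReal.ofReal (4 * (17 * Real.sqrt (2 * Real.pi)))
      * (∫⁻ x : ℝ, ENNReal.ofReal (|f x| * (1 + |x|)))
      * (∫⁻ x : ℝ, ENNReal.ofReal (|g x| * (1 + |x|))) with hK0d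
  have hK0 : K0 ≠ ⊤ :=
    ENNReal.mul_ne_top (ENNReal.mul_ne_top ENNReal.ofReal_ne_top hLf) hLg
  have hβ3 : ∀ s₁ s₂ : ℝ, 0 ≤ CH ^ 2 * (|H - 1 / 2|⁻¹) ^ 2
      * ∫ θ in Set.Ioi (0:ℝ), ((θ + s₁) ^ (H - 1 / 2) - (θ + s₂) ^ (H - 1 / 2)) ^ 2 :=
    fun s₁ s₂ => mul_nonneg (by positivity) (integral_nonneg fun θ => sq_nonneg _)
  calc (∫⁻ s₁ in Set.Ioi (0 : ℝ), ∫⁻ s₂ in Set.Ioi (0 : ℝ), ∫⁻ η : ℝ, ∫⁻ x : ℝ, ∫⁻ x' : ℝ,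
      ENNReal.ofReal (η ^ 2 * |f x * g x'|
        * ‖Complex.exp (Complex.I * η * x) - 1‖
        * ‖1 - Complex.exp (-(Complex.I * η * x'))‖
        * (s₁ * s₂) ^ (H - 1 / 2)
        * Real.exp (-(1 / 2) * (β2 * (s₁ ^ (2 * H) + s₂ ^ (2 * H))
            + CH ^ 2 * (|H - 1 / 2|⁻¹) ^ 2
              * ∫ θ in Set.Ioi (0 : ℝ),
                  ((θ + s₁) ^ (H - 1 / 2) - (θ + s₂) ^ (H - 1 / 2)) ^ 2) * η ^ 2)))
      ≤ ∫⁻ s₁ in Set.Ioi (0:ℝ), ∫⁻ s₂ in Set.Ioi (0:ℝ),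
          K0 * ENNReal.ofReal ((s₁ * s₂) ^ (H - 1 / 2)
            * (β2 / 2 * (s₁ ^ (2 * H) + s₂ ^ (2 * H)))
              ^ (-((((2 + (if s₁ ≤ 1 then (0:ℕ) else 1) + (if s₂ ≤ 1 then (0:ℕ) else 1) : ℕ)) : ℝ) + 1) / 2)) := by
        refine setLIntegral_mono' measurableSet_Ioi fun s₁ hs₁ => ?_
        refine setLIntegral_mono' measurableSet_Ioi fun s₂ hs₂ => ?_
        exact triple_bound H β2 hβ2pos _ (hβ3 s₁ s₂) f g hLf hLg hs₁ hs₂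
    _ = K0 * ∫⁻ s₁ in Set.Ioi (0:ℝ), ∫⁻ s₂ in Set.Ioi (0:ℝ),
          ENNReal.ofReal ((s₁ * s₂) ^ (H - 1 / 2)
            * (β2 / 2 * (s₁ ^ (2 * H) + s₂ ^ (2 * H)))
              ^ (-((((2 + (if s₁ ≤ 1 then (0:ℕ) else 1) + (if s₂ ≤ 1 then (0:ℕ) else 1) : ℕ)) : ℝ) + 1) / 2)) := by
        have e1 : ∀ s₁ : ℝ, (∫⁻ s₂ in Set.Ioi (0:ℝ),
            K0 * ENNReal.ofReal ((s₁ * s₂) ^ (H - 1 / 2)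
              * (β2 / 2 * (s₁ ^ (2 * H) + s₂ ^ (2 * H)))
                ^ (-((((2 + (if s₁ ≤ 1 then (0:ℕ) else 1) + (if s₂ ≤ 1 then (0:ℕ) else 1) : ℕ)) : ℝ) + 1) / 2)))
            = K0 * ∫⁻ s₂ in Set.Ioi (0:ℝ),
                ENNReal.ofReal ((s₁ * s₂) ^ (H - 1 / 2)
                  * (β2 / 2 * (s₁ ^ (2 * H) + s₂ ^ (2 * H)))
                    ^ (-((((2 + (if s₁ ≤ 1 then (0:ℕ) else 1) + (if s₂ ≤ 1 then (0:ℕ) else 1) : ℕ)) : ℝ) + 1) / 2)) :=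
          fun s₁ => lintegral_const_mul' _ _ hK0
        simp_rw [e1]
        exact lintegral_const_mul' _ _ hK0
    _ < ⊤ := ENNReal.mul_lt_top (lt_top_iff_ne_top.mpr hK0) (T_fin H (β2 / 2) hb hH hH1)
end
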